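/- arXiv:2201.04323 — 5 statements merged into one kernel-verified Lean document; each statement's English description precedes it below -/
import Mathlib

section
/- Let 1 ≤ k ≤ n and let A be a real symmetric n×n matrix with A ∈ Γ_k (when k = n, set σ_{n+1}(A) = 0). Then (k+1)·σ_{k+1}(A) ≤ ((n−k)/n)·σ_1(A)·σ_k(A). -/
open Matrix

/-- The `k`-th elementary symmetric function of the eigenvalues of an `n × n` real
matrix `A`, characterized by `det (t • I + A) = ∑ j ≤ n, sigmaElem n j A * t ^ (n - j)`.
Concretely it is the coefficient of `t^(n-k)` in the characteristic polynomial of `-A`.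
By convention `sigmaElem n 0 A = 1` and `sigmaElem n k A = 0` for `k > n`. -/
noncomputable def sigmaElem (n k : ℕ) (A : Matrix (Fin n) (Fin n) ℝ) : ℝ :=
  if k ≤ n then ((-A).charpoly).coeff (n - k) else 0

/-- `sigmaD n k A i j = ∂σ_k/∂a_{ij} (A)`, the `(i,j)` entry of the gradient matrix
`σ_k'(A)` of the polynomial map `A ↦ σ_k(A)`. -/
noncomputable def sigmaD (n k : ℕ) (A : Matrix (Fin n) (Fin n) ℝ) (i j : Fin n) : ℝ :=
  deriv (fun t : ℝ => sigmaElem n k (A + t • Matrix.single i j 1)) 0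

/-- The gradient matrix `σ_k'(A)` of the polynomial map `A ↦ σ_k(A)`. -/
noncomputable def sigmaGrad (n k : ℕ) (A : Matrix (Fin n) (Fin n) ℝ) :
    Matrix (Fin n) (Fin n) ℝ :=
  Matrix.of fun i j => sigmaD n k A i j

/-- The Gårding cone `Γ_k`: real symmetric `n × n` matrices with `σ_j(A) > 0` for
`j = 1, …, k`. -/
def GammaCone (n k : ℕ) : Set (Matrix (Fin n) (Fin n) ℝ) :=
  {A | A.IsSymm ∧ ∀ j, 1 ≤ j → j ≤ k → 0 < sigmaElem n j A}

/-- Partial derivative `∂u/∂x_i` of `u : ℝⁿ → ℝ`. -/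
noncomputable def pd (n : ℕ) (u : (Fin n → ℝ) → ℝ) (i : Fin n) (x : Fin n → ℝ) : ℝ :=
  fderiv ℝ u x (Pi.single i 1)

/-- The Hessian matrix `D²u(x) = (∂²u/∂x_i∂x_j (x))`. -/
noncomputable def hess (n : ℕ) (u : (Fin n → ℝ) → ℝ) (x : Fin n → ℝ) :
    Matrix (Fin n) (Fin n) ℝ :=
  Matrix.of fun i j => pd n (fun y => pd n u j y) i x


section Aux

open Polynomial


lemma esymm_zero' (s : Multiset ℝ) : s.esymm 0 = 1 := by simp [Multiset.esymm]

lemma esymm_of_lt (s : Multiset ℝ) (k : ℕ) (h : Multiset.card s < k) : s.esymm k = 0 := by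
  simp [Multiset.esymm, Multiset.powersetCard_eq_empty _ h]

lemma esymm_one' (s : Multiset ℝ) : s.esymm 1 = s.sum := by
  simp [Multiset.esymm, Multiset.powersetCard_one, Multiset.map_map]

lemma esymm_cons (a : ℝ) (s : Multiset ℝ) (k : ℕ) :
    (a ::ₘ s).esymm (k + 1) = s.esymm (k + 1) + a * s.esymm k := by
  simp only [Multiset.esymm, Multiset.powersetCard_cons, Multiset.map_add, Multiset.sum_add,
    Multiset.map_map]
  congr 1
  rw [← Multiset.sum_map_mul_left]
  exact congrArg _ (Multiset.map_congr rfl fun x _ => by simp [Multiset.prod_cons])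

lemma esymm_card (s : Multiset ℝ) : s.esymm (Multiset.card s) = s.prod := by
  induction s using Multiset.induction with
  | empty => simp [Multiset.esymm]
  | cons a s ih =>
    rw [Multiset.card_cons, esymm_cons, esymm_of_lt s _ (Nat.lt_succ_self _), ih,
      Multiset.prod_cons, zero_add]

lemma sq_sum_id (s : Multiset ℝ) :
    s.sum ^ 2 = (s.map (fun a => a ^ 2)).sum + 2 * s.esymm 2 := by
  induction s using Multiset.induction with
  | empty => simp [esymm_of_lt (0 : Multiset ℝ) 2 (by simp)]
  | cons a s ih =>
    rw [Multiset.sum_cons, Multiset.map_cons, Multiset.sum_cons,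
      show (2:ℕ) = 1 + 1 from rfl, esymm_cons, esymm_one']
    ring_nf
    ring_nf at ih
    nlinarith [ih]

lemma cs_multiset (s : Multiset ℝ) :
    s.sum ^ 2 ≤ (Multiset.card s : ℝ) * (s.map (fun a => a ^ 2)).sum := by
  induction s using Multiset.induction with
  | empty => simp
  | cons a s ih =>
    have hq : (0:ℝ) ≤ (s.map (fun a => a ^ 2)).sum :=
      Multiset.sum_nonneg (by intro x hx; obtain ⟨b, _, rfl⟩ := Multiset.mem_map.1 hx; positivity)
    rw [Multiset.sum_cons, Multiset.map_cons, Multiset.sum_cons, Multiset.card_cons]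
    rcases eq_or_ne s 0 with rfl | hne
    · simp
    have hc1 : (1:ℝ) ≤ (Multiset.card s : ℝ) := by
      have : 0 < Multiset.card s := Multiset.card_pos.2 hne
      exact_mod_cast this
    push_cast
    nlinarith [sq_nonneg ((Multiset.card s : ℝ) * a - s.sum), ih, hq, hc1]

lemma esymm_inv (s : Multiset ℝ) (h0 : (0:ℝ) ∉ s) :
    ∀ k ≤ Multiset.card s, s.prod * (s.map (·⁻¹)).esymm k = s.esymm (Multiset.card s - k) := by
  induction s using Multiset.induction with
  | empty =>
    intro k hk
    obtain rfl : k = 0 := Nat.le_zero.mp (by simpa using hk)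
    simp [Multiset.esymm]
  | cons a s ih =>
    have ha : a ≠ 0 := fun h => h0 (h ▸ Multiset.mem_cons_self a s)
    have h0s : (0:ℝ) ∉ s := fun h => h0 (Multiset.mem_cons_of_mem h)
    intro k hk
    rcases k with _ | k'
    · rw [esymm_zero', mul_one, Nat.sub_zero, esymm_card]
    rw [Multiset.map_cons, esymm_cons, Multiset.prod_cons]
    rcases Nat.lt_or_ge (k' + 1) (Multiset.card (a ::ₘ s)) with hlt | hge
    · have hk'c : k' + 1 ≤ Multiset.card s := by rw [Multiset.card_cons] at hlt; omega
      have e1 := ih h0s (k' + 1) hk'c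
      have e2 := ih h0s k' (by omega)
      rw [Multiset.card_cons]
      have hsub : Multiset.card s + 1 - (k' + 1) = (Multiset.card s - (k' + 1)) + 1 := by omega
      rw [hsub, esymm_cons]
      have ha' : a * a⁻¹ = 1 := mul_inv_cancel₀ ha
      have hidx : Multiset.card s - k' = Multiset.card s - (k' + 1) + 1 := by omega
      rw [hidx] at e2
      calc a * s.prod * ((s.map (·⁻¹)).esymm (k' + 1) + a⁻¹ * (s.map (·⁻¹)).esymm k')
          = a * (s.prod * (s.map (·⁻¹)).esymm (k' + 1))
            + (a * a⁻¹) * (s.prod * (s.map (·⁻¹)).esymm k') := by ring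
        _ = s.esymm (Multiset.card s - (k' + 1) + 1) + a * s.esymm (Multiset.card s - (k' + 1)) := by
            rw [e1, ha', e2]; ring
    · have hk'c : k' = Multiset.card s := by
        rw [Multiset.card_cons] at hk hge; omega
      subst hk'c
      rw [Multiset.card_cons, Nat.sub_self, esymm_zero']
      rw [esymm_of_lt (s.map (·⁻¹)) (Multiset.card s + 1) (by rw [Multiset.card_map]; omega)]
      have e2 := ih h0s (Multiset.card s) le_rfl
      rw [Nat.sub_self, esymm_zero'] at e2
      calc a * s.prod * (0 + a⁻¹ * (s.map (·⁻¹)).esymm (Multiset.card s))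
          = (a * a⁻¹) * (s.prod * (s.map (·⁻¹)).esymm (Multiset.card s)) := by ring
        _ = 1 := by rw [mul_inv_cancel₀ ha, e2, one_mul]

lemma deriv_step (s : Multiset ℝ) (hm : 1 ≤ Multiset.card s) :
    ∃ t : Multiset ℝ, Multiset.card t = Multiset.card s - 1 ∧
      ∀ i ≤ Multiset.card s - 1,
        t.esymm i = (((Multiset.card s : ℝ) - i) / Multiset.card s) * s.esymm i := by
  set m := Multiset.card s with hmdef
  set f : ℝ[X] := (s.map fun r => X - C r).prod with hf
  have hmonic : f.Monic := monic_multiset_prod_of_monic _ _ fun a _ => monic_X_sub_C a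
  have hdeg : f.natDegree = m := by
    rw [hf, natDegree_multiset_prod_X_sub_C_eq_card]
  have hroots : f.roots = s := roots_multiset_prod_X_sub_C s
  set g := derivative f with hg
  have h1 : m ≤ Multiset.card g.roots + 1 := by
    have := Polynomial.card_roots_le_derivative f
    rwa [hroots] at this
  have h2 : Multiset.card g.roots ≤ g.natDegree := Polynomial.card_roots' g
  have h3 : g.natDegree ≤ m - 1 := hdeg ▸ natDegree_derivative_le f
  have hgdeg : g.natDegree = m - 1 := by omega
  have hgroots : Multiset.card g.roots = g.natDegree := by omega
  have hglead : g.leadingCoeff = (m : ℝ) := by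
    rw [leadingCoeff, hgdeg, hg, coeff_derivative]
    have hc : f.coeff (m - 1 + 1) = 1 := by
      rw [show m - 1 + 1 = m by omega, ← hdeg]
      exact hmonic.coeff_natDegree
    rw [hc, one_mul]
    rw [Nat.cast_sub hm]
    push_cast; ring
  refine ⟨g.roots, by rw [hgroots, hgdeg], fun i hi => ?_⟩
  have hcoe : g.coeff (m - 1 - i) = g.leadingCoeff * (-1) ^ (g.natDegree - (m - 1 - i)) *
      g.roots.esymm (g.natDegree - (m - 1 - i)) :=
    Polynomial.coeff_eq_esymm_roots_of_card hgroots (by omega)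
  rw [hgdeg, show m - 1 - (m - 1 - i) = i by omega, hglead] at hcoe
  have hder : g.coeff (m - 1 - i) = f.coeff (m - 1 - i + 1) * ((m - 1 - i : ℕ) + 1 : ℝ) := by
    rw [hg, coeff_derivative]
  have hfc : f.coeff (m - 1 - i + 1) = (-1) ^ i * s.esymm i := by
    have h := Multiset.prod_X_sub_C_coeff s (show m - 1 - i + 1 ≤ m by omega)
    rwa [show Multiset.card s - (m - 1 - i + 1) = i by omega] at h
  rw [hfc] at hder
  have hcast : ((m - 1 - i : ℕ) : ℝ) + 1 = (m : ℝ) - i := by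
    rw [Nat.cast_sub (by omega), Nat.cast_sub hm]
    push_cast; ring
  rw [hcast] at hder
  rw [hder] at hcoe
  have hm0 : (m : ℝ) ≠ 0 := by positivity
  rcases Nat.even_or_odd i with he | ho
  · rw [he.neg_one_pow] at hcoe
    field_simp
    linarith [hcoe]
  · rw [ho.neg_one_pow] at hcoe
    field_simp
    linarith [hcoe]

lemma newton_one (s : Multiset ℝ) (h2 : 2 ≤ Multiset.card s) :
    s.esymm 2 / ((Multiset.card s).choose 2 : ℝ) ≤ (s.sum / (Multiset.card s : ℝ)) ^ 2 := by
  set m := Multiset.card s with hm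
  have hm2 : (2:ℝ) ≤ (m:ℝ) := by exact_mod_cast h2
  have hc2 : ((m.choose 2 : ℕ) : ℝ) = (m:ℝ) * ((m:ℝ) - 1) / 2 := by
    rw [Nat.cast_choose_two]
  have hq := sq_sum_id s
  have hcs := cs_multiset s
  rw [← hm] at hcs
  rw [hc2, div_pow, div_le_div_iff₀ (by nlinarith) (by positivity)]
  nlinarith [mul_le_mul_of_nonneg_left hcs (show (0:ℝ) ≤ (m:ℝ) by linarith)]

lemma choose_step (m i : ℕ) (hm : 1 ≤ m) :
    ((m:ℝ) - i) * (m.choose i : ℝ) = (m : ℝ) * ((m-1).choose i : ℝ) := by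
  rcases le_or_gt i m with him | him
  · have h1 : m * (m-1).choose i = m.choose (i+1) * (i+1) := by
      have := Nat.add_one_mul_choose_eq (m-1) i
      rwa [Nat.sub_add_cancel hm] at this
    have h2 : m.choose (i+1) * (i+1) = m.choose i * (m - i) := Nat.choose_succ_right_eq m i
    have hnat : m.choose i * (m - i) = m * (m-1).choose i := (h1.trans h2).symm
    calc ((m:ℝ) - i) * (m.choose i : ℝ) = ((m.choose i * (m - i) : ℕ) : ℝ) := by
          push_cast [Nat.cast_sub him]; ring
      _ = ((m * (m-1).choose i : ℕ) : ℝ) := by rw [hnat]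
      _ = (m : ℝ) * ((m-1).choose i : ℝ) := by push_cast; ring
  · rw [Nat.choose_eq_zero_of_lt him, Nat.choose_eq_zero_of_lt (by omega)]
    simp

lemma newton_p : ∀ (m : ℕ) (s : Multiset ℝ), Multiset.card s = m → ∀ j, 1 ≤ j → j + 1 ≤ m →
    s.esymm (j-1) / (m.choose (j-1) : ℝ) * (s.esymm (j+1) / (m.choose (j+1) : ℝ)) ≤
      (s.esymm j / (m.choose j : ℝ)) ^ 2 := by
  intro m
  induction m using Nat.strong_induction_on with
  | _ m IH =>
    intro s hcard j hj1 hjm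
    rcases eq_or_lt_of_le hjm with htop | hlt
    · rcases eq_or_ne s.prod 0 with hp | hp
      · have hem : s.esymm m = 0 := by rw [← hcard, esymm_card, hp]
        rw [htop, hem]
        simp only [zero_div, mul_zero]
        positivity
      · have h0 : (0:ℝ) ∉ s := fun h => hp (Multiset.prod_eq_zero h)
        set s' := s.map (·⁻¹) with hs'
        have hcard' : Multiset.card s' = m := by rw [hs', Multiset.card_map, hcard]
        have hinv := esymm_inv s h0
        rw [hcard] at hinv
        have e0 : s.prod * s'.esymm 0 = s.esymm m := by
          have := hinv 0 (by omega); simpa using this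
        have e1 : s.prod * s'.esymm 1 = s.esymm (m-1) := hinv 1 (by omega)
        have e2 : s.prod * s'.esymm 2 = s.esymm (m-2) := hinv 2 (by omega)
        have hN := newton_one s' (by rw [hcard']; omega)
        rw [hcard'] at hN
        have hj : j = m - 1 := by omega
        have hj1' : j - 1 = m - 2 := by omega
        have hjp1 : j + 1 = m := by omega
        rw [hjp1, hj1', hj]
        rw [Nat.choose_self, ← e0, ← e1, ← e2]
        rw [esymm_zero', mul_one] at e0 ⊢
        have hsym2 : (m.choose (m-2) : ℝ) = (m.choose 2 : ℝ) := by
          rw [Nat.choose_symm (show 2 ≤ m by omega)]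
        have hsym1 : (m.choose (m-1) : ℝ) = (m : ℝ) := by
          rw [Nat.choose_symm (show 1 ≤ m by omega), Nat.choose_one_right]
        rw [hsym2, hsym1]
        have hP2 : (0:ℝ) < s.prod ^ 2 := by positivity
        calc s.prod * s'.esymm 2 / (m.choose 2 : ℝ) * (s.prod / (1:ℕ))
            = s.prod ^ 2 * (s'.esymm 2 / (m.choose 2 : ℝ)) := by ring
          _ ≤ s.prod ^ 2 * ((s'.sum / (m:ℝ)) ^ 2) :=
              mul_le_mul_of_nonneg_left hN (le_of_lt hP2)
          _ = (s.prod * s'.esymm 1 / (m:ℝ)) ^ 2 := by rw [esymm_one']; ring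
    · obtain ⟨t, hct, hes⟩ := deriv_step s (by omega)
      rw [hcard] at hct hes
      have key : ∀ i ≤ m - 1, t.esymm i / ((m-1).choose i : ℝ) = s.esymm i / (m.choose i : ℝ) := by
        intro i hi
        have h := hes i hi
        have hcs := choose_step m i (by omega)
        have hz : ((m.choose i : ℕ) : ℝ) ≠ 0 := by
          have : 0 < m.choose i := Nat.choose_pos (by omega)
          exact_mod_cast this.ne'
        have hz' : (((m-1).choose i : ℕ) : ℝ) ≠ 0 := by
          have : 0 < (m-1).choose i := Nat.choose_pos (by omega)
          exact_mod_cast this.ne'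
        have hm0 : (m:ℝ) ≠ 0 := by
          have : (0:ℕ) < m := by omega
          exact_mod_cast this.ne'
        rw [h, div_eq_div_iff hz' hz]
        field_simp
        linear_combination s.esymm i * hcs
      have hIH := IH (m-1) (by omega) t hct j hj1 (by omega)
      rw [key (j-1) (by omega), key j (by omega), key (j+1) (by omega)] at hIH
      exact hIH

variable {n : ℕ}

lemma charpoly_conj_unit (U D V : Matrix (Fin n) (Fin n) ℝ) (hUV : U * V = 1)
    (_hVU : V * U = 1) : (U * D * V).charpoly = D.charpoly := by
  unfold Matrix.charpoly
  have h1 : (C : ℝ →+* ℝ[X]).mapMatrix U * (C : ℝ →+* ℝ[X]).mapMatrix V = 1 := by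
    rw [← _root_.map_mul, hUV, _root_.map_one]
  have key : charmatrix (U * D * V) =
      (C : ℝ →+* ℝ[X]).mapMatrix U * charmatrix D * (C : ℝ →+* ℝ[X]).mapMatrix V := by
    unfold charmatrix
    rw [mul_sub, sub_mul]
    congr 1
    · have hcomm : Commute (Matrix.scalar (Fin n) (X : ℝ[X]))
          ((C : ℝ →+* ℝ[X]).mapMatrix V) :=
        scalar_commute _ (fun r' => Commute.all _ _) _
      rw [Matrix.mul_assoc, hcomm.eq, ← Matrix.mul_assoc, h1, Matrix.one_mul]
    · rw [← _root_.map_mul, ← _root_.map_mul]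
  rw [key, det_mul, det_mul, ← RingHom.map_det, ← RingHom.map_det]
  have hdet : U.det * V.det = 1 := by rw [← det_mul, hUV, det_one]
  calc C U.det * (charmatrix D).det * C V.det
      = C (U.det * V.det) * (charmatrix D).det := by rw [_root_.map_mul]; ring
    _ = (charmatrix D).det := by rw [hdet, Polynomial.C_1, one_mul]

lemma charpoly_diagonal (d : Fin n → ℝ) :
    (Matrix.diagonal d).charpoly = ∏ i, (X - C (d i)) := by
  unfold Matrix.charpoly
  have h : charmatrix (Matrix.diagonal d) = Matrix.diagonal (fun i => X - C (d i)) := by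
    apply Matrix.ext
    intro i j
    rcases eq_or_ne i j with rfl | hij
    · rw [charmatrix_apply_eq, diagonal_apply_eq (fun i => X - C (d i)) i, diagonal_apply_eq d i]
    · rw [charmatrix_apply_ne _ _ _ hij, diagonal_apply_ne _ hij, diagonal_apply_ne _ hij]
      simp
  rw [h, det_diagonal]

lemma charpoly_hermitian (B : Matrix (Fin n) (Fin n) ℝ) (hB : B.IsHermitian) :
    B.charpoly = ∏ i, (X - C (hB.eigenvalues i)) := by
  have hsp := hB.spectral_theorem
  set U : Matrix (Fin n) (Fin n) ℝ := (hB.eigenvectorUnitary : Matrix (Fin n) (Fin n) ℝ) with hU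
  have hUV : U * star U = 1 := Matrix.mem_unitaryGroup_iff.mp hB.eigenvectorUnitary.2
  have hVU : star U * U = 1 := Matrix.mem_unitaryGroup_iff'.mp hB.eigenvectorUnitary.2
  have hco : (RCLike.ofReal ∘ hB.eigenvalues : Fin n → ℝ) = hB.eigenvalues := by
    funext i; simp [RCLike.ofReal]
  calc B.charpoly = (U * Matrix.diagonal (RCLike.ofReal ∘ hB.eigenvalues) * star U).charpoly := by
        exact congrArg _ hsp
    _ = (Matrix.diagonal (RCLike.ofReal ∘ hB.eigenvalues)).charpoly :=
        charpoly_conj_unit _ _ _ hUV hVU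
    _ = ∏ i, (X - C (hB.eigenvalues i)) := by rw [hco, _root_.charpoly_diagonal]



lemma symm_to_herm {n : ℕ} (A : Matrix (Fin n) (Fin n) ℝ) (hA : A.IsSymm) :
    (-A).IsHermitian := by
  have h : A.IsHermitian := by
    rw [Matrix.IsHermitian, conjTranspose_eq_transpose_of_trivial]
    exact hA
  exact h.neg

lemma sigma_eq_esymm {n : ℕ} (A : Matrix (Fin n) (Fin n) ℝ) (hA : A.IsSymm) (k : ℕ)
    (hk : k ≤ n) :
    sigmaElem n k A =
      ((Finset.univ.val.map fun i => -((symm_to_herm A hA).eigenvalues i)) : Multiset ℝ).esymm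
        k := by
  have hB := symm_to_herm A hA
  rw [sigmaElem, if_pos hk, charpoly_hermitian (-A) hB]
  have hprod : (∏ i, (X - C (hB.eigenvalues i))) =
      ((Finset.univ.val.map fun i => X + C (-(hB.eigenvalues i))) : Multiset ℝ[X]).prod := by
    rw [Finset.prod_eq_multiset_prod]
    congr 1
    exact Multiset.map_congr rfl fun i _ => by rw [map_neg, sub_eq_add_neg]
  rw [hprod]
  have hcard : Multiset.card (Finset.univ.val : Multiset (Fin n)) = n := by
    simp
  have h := Multiset.prod_X_add_C_coeff' (Finset.univ.val : Multiset (Fin n))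
      (fun i => -(hB.eigenvalues i)) (k := n - k) (by rw [hcard]; omega)
  rw [hcard] at h
  rw [h, show n - (n - k) = k by omega]

end Aux

/-- for `A ∈ Γ_k`, `(k+1) σ_{k+1}(A) ≤ ((n-k)/n) σ_1(A) σ_k(A)`. -/
theorem statement2 (n k : ℕ) (hk1 : 1 ≤ k) (hkn : k ≤ n)
    (A : Matrix (Fin n) (Fin n) ℝ) (hA : A ∈ GammaCone n k) :
    (k + 1 : ℝ) * sigmaElem n (k + 1) A ≤
      (((n : ℝ) - k) / n) * sigmaElem n 1 A * sigmaElem n k A := by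
  obtain ⟨hsymm, hpos⟩ := hA
  rcases eq_or_lt_of_le hkn with rfl | hklt
  · have h1 : sigmaElem k (k+1) A = 0 := by rw [sigmaElem, if_neg (by omega)]
    rw [h1, sub_self, zero_div, zero_mul, zero_mul, mul_zero]
  -- now k < n
  set s : Multiset ℝ := Finset.univ.val.map fun i => -((symm_to_herm A hsymm).eigenvalues i)
    with hs
  have hcards : Multiset.card s = n := by rw [hs, Multiset.card_map]; simp
  have σeq : ∀ j, j ≤ n → sigmaElem n j A = s.esymm j := fun j hj =>
    sigma_eq_esymm A hsymm j hj
  have spos : ∀ j, 1 ≤ j → j ≤ k → 0 < s.esymm j := by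
    intro j h1 h2
    rw [← σeq j (by omega)]
    exact hpos j h1 h2
  have NW := newton_p n s hcards
  have hn0 : (0:ℝ) < n := by
    have : 0 < n := by omega
    exact_mod_cast this
  have Q : ∀ j, 1 ≤ j → j ≤ k →
      s.esymm (j+1) / (n.choose (j+1) : ℝ) ≤
        (s.esymm 1 / (n : ℝ)) * (s.esymm j / (n.choose j : ℝ)) := by
    intro j
    induction j with
    | zero => omega
    | succ j ihj =>
      intro h1 hk'
      rcases Nat.eq_zero_or_pos j with rfl | hj0
      · have hN := NW 1 le_rfl (by omega)
        rw [show (1:ℕ) - 1 = 0 from rfl, esymm_zero', Nat.choose_zero_right,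
          Nat.choose_one_right] at hN
        simp only [Nat.cast_one, div_one, one_mul] at hN
        rw [show (0:ℕ) + 1 = 1 from rfl]
        rw [Nat.choose_one_right]
        nlinarith [hN]
      · have hQj := ihj (by omega) (by omega)
        have hN := NW (j+1) (by omega) (by omega)
        rw [show j + 1 - 1 = j by omega] at hN
        have ha : (0:ℝ) < s.esymm j / (n.choose j : ℝ) := by
          apply div_pos (spos j hj0 (by omega))
          exact_mod_cast Nat.choose_pos (by omega : j ≤ n)
        have hb : (0:ℝ) < s.esymm (j+1) / (n.choose (j+1) : ℝ) := by
          apply div_pos (spos (j+1) (by omega) (by omega))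
          exact_mod_cast Nat.choose_pos (by omega : j + 1 ≤ n)
        have hp1 : (0:ℝ) < s.esymm 1 / (n : ℝ) :=
          div_pos (spos 1 le_rfl (by omega)) hn0
        have h4 := mul_le_mul_of_nonneg_left hQj hb.le
        nlinarith [hN, h4, ha]
  have hQk := Q k hk1 le_rfl
  have hc : (0:ℝ) < (n.choose k : ℝ) := by exact_mod_cast Nat.choose_pos hkn
  have hc' : (0:ℝ) < (n.choose (k+1) : ℝ) := by
    exact_mod_cast Nat.choose_pos (by omega : k + 1 ≤ n)
  have hid : ((k:ℝ)+1) * (n.choose (k+1) : ℝ) = ((n:ℝ) - k) * (n.choose k : ℝ) := by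
    have h := Nat.choose_succ_right_eq n k
    have h2 : (n.choose (k+1) : ℝ) * ((k:ℝ)+1) = (n.choose k : ℝ) * (((n - k : ℕ)) : ℝ) := by
      exact_mod_cast h
    rw [Nat.cast_sub hkn] at h2
    linarith [h2]
  rw [σeq (k+1) (by omega), σeq 1 (by omega), σeq k hkn]
  rw [div_mul_div_comm, div_le_div_iff₀ hc' (mul_pos hn0 hc)] at hQk
  have h5 : ((k:ℝ)+1) * (s.esymm (k+1) * ((n:ℝ) * (n.choose k : ℝ))) ≤
      ((k:ℝ)+1) * (s.esymm 1 * s.esymm k * (n.choose (k+1) : ℝ)) :=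
    mul_le_mul_of_nonneg_left hQk (by positivity)
  have h6 : ((k:ℝ)+1) * (s.esymm 1 * s.esymm k * (n.choose (k+1) : ℝ)) =
      (((n:ℝ) - k) * (s.esymm 1 * s.esymm k)) * (n.choose k : ℝ) := by
    linear_combination (s.esymm 1 * s.esymm k) * hid
  have hgoal' : ((k:ℝ) + 1) * s.esymm (k+1) * (n:ℝ) ≤ ((n:ℝ) - k) * s.esymm 1 * s.esymm k := by
    have := le_of_mul_le_mul_right (by nlinarith [h5, h6] :
      (((k:ℝ) + 1) * s.esymm (k+1) * (n:ℝ)) * (n.choose k : ℝ) ≤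
        (((n:ℝ) - k) * s.esymm 1 * s.esymm k) * (n.choose k : ℝ)) hc
    exact this
  rw [div_mul_eq_mul_div, div_mul_eq_mul_div, le_div_iff₀ hn0]
  linarith [hgoal']
end

section
/- Let Ω ⊂ ℝⁿ be an open set, 1 ≤ k ≤ n, and let u : ℝⁿ → ℝ be C³ on Ω. Then for every j ∈ {1,…,n} and every x ∈ Ω, Σ_{i=1}^{n} ∂/∂x_i [ σ_k^{ij}(D²u) ](x) = 0; that is, each column of the matrix-valued map x ↦ σ_k'(D²u(x)) is a divergence-free vector field on Ω. -/
open Matrix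

/-! ### Auxiliary algebraic lemmas about determinants -/

section Alg
variable {R : Type*} [CommRing R] {n : ℕ}

set_option linter.unusedSectionVars false

private lemma updc_comm (M : Matrix (Fin n) (Fin n) R) {j q : Fin n} (h : j ≠ q)
    (v w : Fin n → R) :
    (M.updateCol j v).updateCol q w = (M.updateCol q w).updateCol j v := by
  ext a b
  by_cases hb : b = q <;> by_cases hb' : b = j <;>
    simp_all [Matrix.updateCol_apply]

private lemma add_smul_std (M : Matrix (Fin n) (Fin n) R) (i j : Fin n) (s : R) :
    M + s • Matrix.single i j 1 =
      M.updateCol j ((fun a => M a j) + s • (Pi.single i 1 : Fin n → R)) := by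
  ext a b
  by_cases hb : b = j <;> by_cases ha : a = i <;>
    simp [Matrix.updateCol_apply, hb, ha, Matrix.single, Pi.single_apply, eq_comm]
  all_goals first | rfl | rw [if_neg (by tauto)] | grind

private lemma det_add_single (M : Matrix (Fin n) (Fin n) R) (i j : Fin n) (s : R) :
    det (M + s • Matrix.single i j 1)
      = det M + s * det (M.updateCol j (Pi.single i 1)) := by
  rw [add_smul_std, det_updateCol_add, det_updateCol_smul, Matrix.updateCol_eq_self]

private lemma det_swap_cols (M : Matrix (Fin n) (Fin n) R) {j q : Fin n} (h : j ≠ q)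
    (v w : Fin n → R) :
    det ((M.updateCol j v).updateCol q w)
      = - det ((M.updateCol j w).updateCol q v) := by
  have key : ((M.updateCol j w).updateCol q v)
      = ((M.updateCol j v).updateCol q w).submatrix id (Equiv.swap j q) := by
    ext a b
    rcases eq_or_ne b j with rfl | hbj
    · simp [Matrix.submatrix_apply, Equiv.swap_apply_left, Matrix.updateCol_apply, h,
        (Ne.symm h)]
    · rcases eq_or_ne b q with rfl | hbq
      · simp [Matrix.submatrix_apply, Equiv.swap_apply_right, Matrix.updateCol_apply, h,
          (Ne.symm h)]
      · simp [Matrix.submatrix_apply, Equiv.swap_apply_of_ne_of_ne hbj hbq,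
          Matrix.updateCol_apply, hbj, hbq]
  have := Matrix.det_permute' (Equiv.swap j q) ((M.updateCol j v).updateCol q w)
  rw [← key, Equiv.Perm.sign_swap h] at this
  rw [this]; push_cast; ring

private lemma det_add_two (M : Matrix (Fin n) (Fin n) R) (i p : Fin n) {j q : Fin n}
    (h : j ≠ q) (s r : R) :
    det (M + s • Matrix.single i j 1 + r • Matrix.single p q 1)
      = det M + s * det (M.updateCol j (Pi.single i 1))
          + r * det (M.updateCol q (Pi.single p 1))
          + s * r * det ((M.updateCol q (Pi.single p 1)).updateCol j (Pi.single i 1)) := by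
  have hq : q ≠ j := Ne.symm h
  rw [add_smul_std M i j s]
  set K := M.updateCol j ((fun a => M a j) + s • (Pi.single i 1 : Fin n → R)) with hK
  rw [add_smul_std K p q r]
  have h1 : (fun a => K a q) = fun a => M a q := by
    funext a; rw [hK]; simp [Matrix.updateCol_apply, hq]
  rw [h1, det_updateCol_add, det_updateCol_smul]
  have h2 : K.updateCol q (fun a => M a q) = K := by
    rw [show (fun a => M a q) = fun a => K a q from h1.symm, Matrix.updateCol_eq_self]
  rw [h2]
  have h3 : det K = det M + s * det (M.updateCol j (Pi.single i 1)) := by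
    rw [hK, det_updateCol_add, det_updateCol_smul, Matrix.updateCol_eq_self]
  have h4 : K.updateCol q (Pi.single p 1)
      = (M.updateCol q (Pi.single p 1)).updateCol j
          ((fun a => M a j) + s • (Pi.single i 1 : Fin n → R)) := by
    rw [hK, updc_comm M h]
  rw [h4, h3]
  have h5 : det ((M.updateCol q (Pi.single p 1)).updateCol j
        ((fun a => M a j) + s • (Pi.single i 1 : Fin n → R)))
      = det (M.updateCol q (Pi.single p 1))
        + s * det ((M.updateCol q (Pi.single p 1)).updateCol j (Pi.single i 1)) := by
    rw [det_updateCol_add, det_updateCol_smul]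
    have h6 : (M.updateCol q (Pi.single p 1)).updateCol j (fun a => M a j)
        = M.updateCol q (Pi.single p 1) := by
      have : (fun a => M a j) = fun a => (M.updateCol q (Pi.single p 1)) a j := by
        funext a; simp [Matrix.updateCol_apply, h]
      rw [this, Matrix.updateCol_eq_self]
    rw [h6]
  rw [h5]
  ring

private lemma det_add_two_same (M : Matrix (Fin n) (Fin n) R) (i p j : Fin n) (s r : R) :
    det (M + s • Matrix.single i j 1 + r • Matrix.single p j 1)
      = det M + s * det (M.updateCol j (Pi.single i 1))
          + r * det (M.updateCol j (Pi.single p 1)) := by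
  rw [add_smul_std M i j s]
  set K := M.updateCol j ((fun a => M a j) + s • (Pi.single i 1 : Fin n → R)) with hK
  rw [add_smul_std K p j r]
  have h1 : K.updateCol j ((fun a => K a j) + r • (Pi.single p 1 : Fin n → R))
      = M.updateCol j (((fun a => M a j) + s • (Pi.single i 1 : Fin n → R))
          + r • (Pi.single p 1 : Fin n → R)) := by
    rw [hK]; ext a b
    by_cases hb : b = j <;> simp [Matrix.updateCol_apply, hb]
  rw [h1, det_updateCol_add, det_updateCol_add, det_updateCol_smul,
    det_updateCol_smul, Matrix.updateCol_eq_self]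

private lemma det_sep (M : Matrix (Fin n) (Fin n) R) (i p j q : Fin n) (s r : R) :
    det (M + s • Matrix.single i j 1 + r • Matrix.single p q 1)
      + det (M + s • Matrix.single i q 1 + r • Matrix.single p j 1)
      + 2 * det M
    = det (M + s • Matrix.single i j 1) + det (M + r • Matrix.single p q 1)
      + det (M + s • Matrix.single i q 1) + det (M + r • Matrix.single p j 1) := by
  rcases eq_or_ne j q with rfl | hjq
  · rw [det_add_two_same, det_add_single M i j s, det_add_single M p j r]
    ring
  · rw [det_add_two M i p hjq s r, det_add_two M i p (Ne.symm hjq) s r,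
      det_add_single, det_add_single, det_add_single, det_add_single]
    have hswap : det ((M.updateCol j (Pi.single p 1)).updateCol q (Pi.single i 1))
        = - det ((M.updateCol q (Pi.single p 1)).updateCol j (Pi.single i 1)) := by
      rw [updc_comm M hjq]
      exact det_swap_cols M (Ne.symm hjq) (Pi.single i 1) (Pi.single p 1)
    rw [hswap]
    ring

end Alg

/-! ### Representation of `sigmaElem` as a linear combination of determinants -/

section Repr
open Polynomial
variable {n : ℕ}

private lemma charpoly_neg_eval (A : Matrix (Fin n) (Fin n) ℝ) (t : ℝ) :
    ((-A).charpoly).eval t = det (t • (1 : Matrix (Fin n) (Fin n) ℝ) + A) := by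
  have h := RingHom.map_det (Polynomial.evalRingHom t) (charmatrix (-A))
  have h2 : (charmatrix (-A)).map (Polynomial.evalRingHom t)
      = t • (1 : Matrix (Fin n) (Fin n) ℝ) + A := by
    ext a b
    rcases eq_or_ne a b with rfl | hab
    · simp [Matrix.map_apply, Matrix.one_apply, Matrix.smul_apply, Matrix.add_apply]
    · simp [Matrix.map_apply, Matrix.one_apply, hab, Matrix.smul_apply, Matrix.add_apply,
        charmatrix_apply_ne _ _ _ hab]
  simp only [RingHom.mapMatrix_apply] at h
  rw [Matrix.charpoly, ← h2, ← h]
  simp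

private lemma sigma_repr {k : ℕ} (hkn : k ≤ n) :
    ∃ c : Fin (n + 1) → ℝ, ∀ A : Matrix (Fin n) (Fin n) ℝ,
      sigmaElem n k A
        = ∑ l : Fin (n + 1), c l * det (((l : ℕ) : ℝ) • (1 : Matrix (Fin n) (Fin n) ℝ) + A) := by
  set v : Fin (n + 1) → ℝ := fun l => ((l : ℕ) : ℝ) with hv
  refine ⟨fun l => (Lagrange.basis Finset.univ v l).coeff (n - k), fun A => ?_⟩
  have hinj : Set.InjOn v ↑(Finset.univ : Finset (Fin (n + 1))) := by
    intro a _ b _ hab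
    exact Fin.ext (Nat.cast_injective hab)
  have hdeg : ((-A).charpoly).degree < ((Finset.univ : Finset (Fin (n + 1))).card : ℕ) := by
    rw [Matrix.charpoly_degree_eq_dim]
    simp only [Fintype.card_fin, Finset.card_univ]
    exact_mod_cast Nat.lt_succ_self n
  have hint := Lagrange.eq_interpolate hinj hdeg
  rw [sigmaElem, if_pos hkn]
  conv_lhs => rw [hint]
  rw [Lagrange.interpolate_apply, Polynomial.finset_sum_coeff]
  refine Finset.sum_congr rfl fun l _ => ?_
  rw [Polynomial.coeff_C_mul, charpoly_neg_eval, mul_comm]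

end Repr

/-! ### Smoothness -/

section Smooth
variable {n : ℕ}

private lemma coord_contDiff (p q : Fin n) :
    ContDiff ℝ 3 (fun B : Fin n → Fin n → ℝ => B p q) := by
  have : (fun B : Fin n → Fin n → ℝ => B p q)
      = (ContinuousLinearMap.proj q : (Fin n → ℝ) →L[ℝ] ℝ).comp
          (ContinuousLinearMap.proj p : (Fin n → Fin n → ℝ) →L[ℝ] (Fin n → ℝ)) := rfl
  rw [this]
  exact ContinuousLinearMap.contDiff _

private lemma contDiff_detAffine (M₀ : Matrix (Fin n) (Fin n) ℝ) :
    ContDiff ℝ 3 (fun B : Fin n → Fin n → ℝ => det (M₀ + Matrix.of B)) := by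
  have hrw : (fun B : Fin n → Fin n → ℝ => det (M₀ + Matrix.of B))
      = fun B => ∑ σ : Equiv.Perm (Fin n),
          ((Equiv.Perm.sign σ : ℤ) : ℝ) * ∏ i, (M₀ (σ i) i + B (σ i) i) := by
    funext B
    simp only [Matrix.det_apply, Matrix.add_apply, Matrix.of_apply, Units.smul_def,
      zsmul_eq_mul]
    try norm_cast
  rw [hrw]
  refine ContDiff.sum fun σ _ => ContDiff.mul contDiff_const (contDiff_prod fun i _ => ?_)
  exact ContDiff.add contDiff_const (coord_contDiff _ _)

end Smooth

/-- each column of `x ↦ σ_k'(D²u(x))` is divergence free. -/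
theorem statement4 (n k : ℕ) (hk1 : 1 ≤ k) (hkn : k ≤ n)
    (Ω : Set (Fin n → ℝ)) (hΩopen : IsOpen Ω)
    (u : (Fin n → ℝ) → ℝ) (huC3 : ContDiffOn ℝ 3 u Ω) :
    ∀ j : Fin n, ∀ x ∈ Ω,
      ∑ i, pd n (fun y => sigmaD n k (hess n u y) i j) i x = 0 := by
  classical
  intro j x hx
  -- the polynomial function `f` on the pi type
  set f : (Fin n → Fin n → ℝ) → ℝ := fun B => sigmaElem n k (Matrix.of B) with hfdef
  obtain ⟨c, hc⟩ := sigma_repr (n := n) (k := k) hkn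
  have hf_eq : f = fun B => ∑ l : Fin (n + 1),
      c l * det (((l : ℕ) : ℝ) • (1 : Matrix (Fin n) (Fin n) ℝ) + Matrix.of B) := by
    funext B; exact hc (Matrix.of B)
  have hf : ContDiff ℝ 3 f := by
    rw [hf_eq]
    exact ContDiff.sum fun l _ => ContDiff.mul contDiff_const (contDiff_detAffine _)
  have hf' : ContDiff ℝ 2 (fderiv ℝ f) := hf.fderiv_right (by norm_num)
  -- standard basis "matrices" as elements of the pi type
  set E : Fin n → Fin n → (Fin n → Fin n → ℝ) :=
    fun i j a b => if i = a ∧ j = b then 1 else 0 with hEdef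
  have hstd : ∀ i' j' : Fin n, (Matrix.single i' j' 1 : Matrix (Fin n) (Fin n) ℝ)
      = Matrix.of (E i' j') := fun _ _ => rfl
  -- directional derivatives along straight lines
  have h_dir : ∀ (A V : Fin n → Fin n → ℝ),
      HasDerivAt (fun t : ℝ => f (A + t • V)) (fderiv ℝ f A V) 0 := by
    intro A V
    have h1 : HasDerivAt (fun t : ℝ => A + t • V) V 0 := by
      simpa using ((hasDerivAt_id (0 : ℝ)).smul_const V).const_add A
    have h0 : A + (0 : ℝ) • V = A := by simp
    have h2 : HasFDerivAt f (fderiv ℝ f A) (A + (0 : ℝ) • V) := by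
      rw [h0]; exact ((hf.differentiable (by norm_num)) A).hasFDerivAt
    exact h2.comp_hasDerivAt 0 h1
  have h_dir2 : ∀ (A U V : Fin n → Fin n → ℝ),
      HasDerivAt (fun s : ℝ => fderiv ℝ f (A + s • U) V)
        ((fderiv ℝ (fderiv ℝ f) A U) V) 0 := by
    intro A U V
    have h1 : HasDerivAt (fun t : ℝ => A + t • U) U 0 := by
      simpa using ((hasDerivAt_id (0 : ℝ)).smul_const U).const_add A
    have h0 : A + (0 : ℝ) • U = A := by simp
    have h2 : HasFDerivAt (fderiv ℝ f) (fderiv ℝ (fderiv ℝ f) A) (A + (0 : ℝ) • U) := by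
      rw [h0]; exact ((hf'.differentiable (by norm_num)) A).hasFDerivAt
    have h3 : HasDerivAt (fun s : ℝ => fderiv ℝ f (A + s • U))
        (fderiv ℝ (fderiv ℝ f) A U) 0 := by
      exact h2.comp_hasDerivAt 0 h1
    simpa using h3.clm_apply (hasDerivAt_const 0 V)
  -- the functional equation for f
  have hFE : ∀ (A : Fin n → Fin n → ℝ) (i' j' p' q' : Fin n) (s r : ℝ),
      f (A + s • E i' j' + r • E p' q') + f (A + s • E i' q' + r • E p' j') + 2 * f A
        = f (A + s • E i' j') + f (A + r • E p' q')
          + f (A + s • E i' q') + f (A + r • E p' j') := by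
    intro A i' j' p' q' s r
    simp only [hf_eq]
    rw [Finset.mul_sum, ← Finset.sum_add_distrib, ← Finset.sum_add_distrib,
      ← Finset.sum_add_distrib, ← Finset.sum_add_distrib, ← Finset.sum_add_distrib]
    refine Finset.sum_congr rfl fun l _ => ?_
    have harr2 : ∀ (i₁ j₁ p₁ q₁ : Fin n) (s₁ r₁ : ℝ),
        ((l : ℕ) : ℝ) • (1 : Matrix (Fin n) (Fin n) ℝ) + Matrix.of (A + s₁ • E i₁ j₁ + r₁ • E p₁ q₁)
          = (((l : ℕ) : ℝ) • (1 : Matrix (Fin n) (Fin n) ℝ) + Matrix.of A)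
              + s₁ • Matrix.single i₁ j₁ 1 + r₁ • Matrix.single p₁ q₁ 1 := by
      intro i₁ j₁ p₁ q₁ s₁ r₁
      rw [hstd, hstd]
      ext a b
      simp [Matrix.add_apply, Matrix.smul_apply, Matrix.of_apply, Pi.add_apply, Pi.smul_apply]
      ring
    have harr1 : ∀ (i₁ j₁ : Fin n) (s₁ : ℝ),
        ((l : ℕ) : ℝ) • (1 : Matrix (Fin n) (Fin n) ℝ) + Matrix.of (A + s₁ • E i₁ j₁)
          = (((l : ℕ) : ℝ) • (1 : Matrix (Fin n) (Fin n) ℝ) + Matrix.of A)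
              + s₁ • Matrix.single i₁ j₁ 1 := by
      intro i₁ j₁ s₁
      rw [hstd]
      ext a b
      simp [Matrix.add_apply, Matrix.smul_apply, Matrix.of_apply, Pi.add_apply, Pi.smul_apply]
      ring
    rw [harr2, harr2, harr1, harr1, harr1, harr1]
    have hdet := det_sep (((l : ℕ) : ℝ) • (1 : Matrix (Fin n) (Fin n) ℝ) + Matrix.of A)
      i' p' j' q' s r
    linear_combination (c l) * hdet
  -- first-order consequence
  have hstep1 : ∀ (A : Fin n → Fin n → ℝ) (i' j' p' q' : Fin n) (s : ℝ),
      fderiv ℝ f (A + s • E i' j') (E p' q') + fderiv ℝ f (A + s • E i' q') (E p' j')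
        = fderiv ℝ f A (E p' q') + fderiv ℝ f A (E p' j') := by
    intro A i' j' p' q' s
    have hLd : HasDerivAt (fun r : ℝ => f (A + s • E i' j' + r • E p' q')
          + f (A + s • E i' q' + r • E p' j'))
        (fderiv ℝ f (A + s • E i' j') (E p' q') + fderiv ℝ f (A + s • E i' q') (E p' j')) 0 :=
      (h_dir _ _).add (h_dir _ _)
    have hRd : HasDerivAt (fun r : ℝ => f (A + s • E i' j') + f (A + r • E p' q')
          + f (A + s • E i' q') + f (A + r • E p' j') - 2 * f A)
        (fderiv ℝ f A (E p' q') + fderiv ℝ f A (E p' j')) 0 := by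
      have := ((((hasDerivAt_const (0 : ℝ) (f (A + s • E i' j'))).add
        (h_dir A (E p' q'))).add (hasDerivAt_const (0 : ℝ) (f (A + s • E i' q')))).add
        (h_dir A (E p' j'))).sub (hasDerivAt_const (0 : ℝ) (2 * f A))
      simp only [zero_add, add_zero, sub_zero] at this
      exact this
    have hfun : (fun r : ℝ => f (A + s • E i' j' + r • E p' q')
          + f (A + s • E i' q' + r • E p' j'))
        = fun r : ℝ => f (A + s • E i' j') + f (A + r • E p' q')
          + f (A + s • E i' q') + f (A + r • E p' j') - 2 * f A := by
      funext r
      have := hFE A i' j' p' q' s r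
      linarith
    rw [hfun] at hLd
    exact hLd.unique hRd
  -- second-order antisymmetry
  have hstep2 : ∀ (A : Fin n → Fin n → ℝ) (i' j' p' q' : Fin n),
      (fderiv ℝ (fderiv ℝ f) A (E i' j')) (E p' q')
        + (fderiv ℝ (fderiv ℝ f) A (E i' q')) (E p' j') = 0 := by
    intro A i' j' p' q'
    have hG : (fun s : ℝ => fderiv ℝ f (A + s • E i' j') (E p' q')
          + fderiv ℝ f (A + s • E i' q') (E p' j'))
        = fun _ : ℝ => fderiv ℝ f A (E p' q') + fderiv ℝ f A (E p' j') :=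
      funext fun s => hstep1 A i' j' p' q' s
    have hL : HasDerivAt (fun s : ℝ => fderiv ℝ f (A + s • E i' j') (E p' q')
          + fderiv ℝ f (A + s • E i' q') (E p' j'))
        ((fderiv ℝ (fderiv ℝ f) A (E i' j')) (E p' q')
          + (fderiv ℝ (fderiv ℝ f) A (E i' q')) (E p' j')) 0 :=
      (h_dir2 _ _ _).add (h_dir2 _ _ _)
    rw [hG] at hL
    exact hL.unique (hasDerivAt_const _ _)
  -- the Hessian as a map into the pi type
  set w : Fin n → (Fin n → ℝ) → ℝ := fun q y => pd n u q y with hwdef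
  set H : (Fin n → ℝ) → Fin n → Fin n → ℝ := fun y p q => pd n (w q) p y with hHdef
  have hu3 : ContDiffAt ℝ 3 u x := huC3.contDiffAt (hΩopen.mem_nhds hx)
  have hw2 : ∀ q, ContDiffAt ℝ 2 (w q) x := by
    intro q
    have h1 : ContDiffAt ℝ 2 (fderiv ℝ u) x := hu3.fderiv_right (by norm_num)
    exact h1.clm_apply contDiffAt_const
  have hentry : ∀ p q, ContDiffAt ℝ 1 (fun y => H y p q) x := by
    intro p q
    have h1 : ContDiffAt ℝ 1 (fderiv ℝ (w q)) x := (hw2 q).fderiv_right (by norm_num)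
    exact h1.clm_apply contDiffAt_const
  have hHdiff : DifferentiableAt ℝ H x :=
    differentiableAt_pi.2 fun p => differentiableAt_pi.2 fun q =>
      ((hentry p q).differentiableAt one_ne_zero)
  -- the second derivative bilinear form of f at H x
  have hBsym := (hf.contDiffAt (x := H x)).isSymmSndFDerivAt (by norm_num)
  -- entries of the derivative of H
  set T : Fin n → Fin n → Fin n → ℝ :=
    fun i p q => fderiv ℝ (fun y => H y p q) x (Pi.single i 1) with hTdef
  have hfderivH : ∀ (v : Fin n → ℝ) (p q : Fin n),
      fderiv ℝ H x v p q = fderiv ℝ (fun y => H y p q) x v := by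
    intro v p q
    have h1 : fderiv ℝ H x = ContinuousLinearMap.pi
        (fun p => fderiv ℝ (fun y => H y p) x) :=
      fderiv_pi fun p => differentiableAt_pi.2 fun q => (hentry p q).differentiableAt one_ne_zero
    rw [h1]
    have h2 : fderiv ℝ (fun y => H y p) x = ContinuousLinearMap.pi
        (fun q => fderiv ℝ (fun y => H y p q) x) :=
      fderiv_pi fun q => (hentry p q).differentiableAt one_ne_zero
    rw [ContinuousLinearMap.pi_apply, h2, ContinuousLinearMap.pi_apply]
  -- symmetry of third derivatives in the first two indices
  have hTsym : ∀ i' p q, T i' p q = T p i' q := by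
    intro i' p q
    have hd : DifferentiableAt ℝ (fderiv ℝ (w q)) x :=
      ((hw2 q).fderiv_right (by norm_num)).differentiableAt one_ne_zero
    have key : ∀ a b : Fin n, fderiv ℝ (fun y => H y a q) x (Pi.single b 1)
        = fderiv ℝ (fderiv ℝ (w q)) x (Pi.single b 1) (Pi.single a 1) := by
      intro a b
      have : (fun y => H y a q) = fun y => (fderiv ℝ (w q) y) (Pi.single a 1) := rfl
      rw [this, fderiv_clm_apply hd (differentiableAt_const _)]
      simp
    have hsymm := ((hw2 q).isSymmSndFDerivAt (by norm_num)).eq (Pi.single i' 1) (Pi.single p 1)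
    rw [hTdef]
    simp only []
    rw [key p i', key i' p, hsymm]
  -- rewrite each summand of the goal
  have hsummand : ∀ i : Fin n,
      pd n (fun y => sigmaD n k (hess n u y) i j) i x
        = ∑ p, ∑ q, T i p q * (fderiv ℝ (fderiv ℝ f) (H x) (E p q)) (E i j) := by
    intro i
    have hsig : ∀ y : Fin n → ℝ, sigmaD n k (hess n u y) i j = fderiv ℝ f (H y) (E i j) := by
      intro y
      have hfun : (fun t : ℝ => sigmaElem n k (hess n u y + t • Matrix.single i j 1))
          = fun t : ℝ => f (H y + t • E i j) := by
        funext t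
        show sigmaElem n k _ = sigmaElem n k _
        congr 1
      rw [sigmaD, hfun]
      exact (h_dir (H y) (E i j)).deriv
    have hpd : pd n (fun y => sigmaD n k (hess n u y) i j) i x
        = fderiv ℝ (fun y => fderiv ℝ f (H y) (E i j)) x (Pi.single i 1) := by
      rw [pd, funext hsig]
    rw [hpd]
    have hgdiff : DifferentiableAt ℝ (fun A => fderiv ℝ f A (E i j)) (H x) :=
      ((hf'.differentiable (by norm_num)) (H x)).clm_apply (differentiableAt_const _)
    have hcomp : fderiv ℝ (fun y => fderiv ℝ f (H y) (E i j)) x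
        = ((fderiv ℝ (fun A => fderiv ℝ f A (E i j)) (H x)).comp (fderiv ℝ H x)) :=
      fderiv_comp x hgdiff hHdiff
    rw [hcomp, ContinuousLinearMap.comp_apply]
    have hgder : fderiv ℝ (fun A => fderiv ℝ f A (E i j)) (H x)
        = (fderiv ℝ (fderiv ℝ f) (H x)).flip (E i j) := by
      have hd2 : DifferentiableAt ℝ (fderiv ℝ f) (H x) :=
        (hf'.differentiable (by norm_num)) (H x)
      rw [fderiv_clm_apply hd2 (differentiableAt_const _)]
      simp
    rw [hgder]
    have hW : fderiv ℝ H x (Pi.single i 1) = ∑ p, ∑ q, T i p q • E p q := by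
      funext a b
      rw [hfderivH (Pi.single i 1) a b]
      have hRHS : (∑ p, ∑ q, T i p q • E p q) a b
          = ∑ p, ∑ q, T i p q * (E p q a b) := by
        simp [Finset.sum_apply, Pi.smul_apply]
      rw [hRHS]
      simp only [hEdef]
      rw [Finset.sum_eq_single a]
      · rw [Finset.sum_eq_single b]
        · simp [hTdef]
        · intro q' _ hq'; simp [hq']
        · intro hb; exact absurd (Finset.mem_univ b) hb
      · intro p' _ hp'
        apply Finset.sum_eq_zero
        intro q' _
        simp [hp']
      · intro ha; exact absurd (Finset.mem_univ a) ha
    rw [hW]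
    rw [map_sum]
    refine Finset.sum_congr rfl fun p _ => ?_
    rw [map_sum]
    refine Finset.sum_congr rfl fun q _ => ?_
    rw [_root_.map_smul]
    simp [ContinuousLinearMap.flip_apply]
  rw [Finset.sum_congr rfl fun i _ => hsummand i]
  -- final antisymmetry argument
  set B2 := fderiv ℝ (fderiv ℝ f) (H x) with hB2def
  set F : Fin n → Fin n → Fin n → ℝ :=
    fun i p q => T i p q * (B2 (E p q)) (E i j) with hFdef
  have hanti : ∀ i' p q, F p i' q = - F i' p q := by
    intro i' p q
    have h1 := hstep2 (H x) i' q p j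
    have h2 := hBsym.eq (E i' j) (E p q)
    have h3 := hTsym p i' q
    have hX : (B2 (E i' q)) (E p j) = - (B2 (E p q)) (E i' j) := by
      rw [← hB2def] at h1 h2
      linarith [h1, h2]
    simp only [hFdef]
    rw [h3, hX]
    ring
  have hS : (∑ i' : Fin n, ∑ p : Fin n, ∑ q : Fin n, F i' p q)
      = - ∑ i' : Fin n, ∑ p : Fin n, ∑ q : Fin n, F i' p q := by
    conv_lhs => rw [Finset.sum_comm]
    rw [← Finset.sum_neg_distrib]
    refine Finset.sum_congr rfl fun p _ => ?_
    rw [← Finset.sum_neg_distrib]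
    refine Finset.sum_congr rfl fun i' _ => ?_
    rw [← Finset.sum_neg_distrib]
    exact Finset.sum_congr rfl fun q _ => hanti p i' q
  have : (∑ i' : Fin n, ∑ p : Fin n, ∑ q : Fin n, F i' p q) = 0 := by linarith
  exact this
end

section
/- For every real symmetric n×n matrix A and every 1 ≤ k ≤ n, the matrices σ_k'(A) and A commute and their product is symmetric; entrywise, Σ_{i=1}^{n} σ_k^{ij}(A)·a_{il} = Σ_{i=1}^{n} σ_k^{il}(A)·a_{ij} for all j, l. -/
open Matrix

open Polynomial

private lemma sigmaD_eq_det (n k : ℕ) (hkn : k ≤ n) (A : Matrix (Fin n) (Fin n) ℝ)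
    (i j : Fin n) :
    sigmaD n k A i j =
      (((charmatrix (-A)).updateCol j (Pi.single i 1)).det).coeff (n - k) := by
  set D := (((charmatrix (-A)).updateCol j (Pi.single i 1)).det).coeff (n - k) with hD
  have key : ∀ t : ℝ, sigmaElem n k (A + t • Matrix.single i j 1)
      = sigmaElem n k A + t * D := by
    intro t
    have hmat : charmatrix (-(A + t • Matrix.single i j 1)) =
        (charmatrix (-A)).updateCol j
          ((fun a => charmatrix (-A) a j) + Pi.single i (C t)) := by
      ext a b : 1
      by_cases hb : b = j
      · subst hb
        simp only [charmatrix_apply, Matrix.updateCol_apply, if_pos rfl, Pi.add_apply,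
          Pi.single_apply, Matrix.add_apply, Matrix.neg_apply, Matrix.smul_apply,
          Matrix.single, Matrix.of_apply, smul_eq_mul, Matrix.diagonal_apply]
        split_ifs <;> first | tauto | (simp <;> ring) | (simp only [map_sub]; ring) |
          (congr 1; simp only [mul_one, neg_add, map_add, map_neg, map_sub]; ring)
      · simp only [charmatrix_apply, Matrix.updateCol_apply, if_neg hb, Matrix.add_apply,
          Matrix.neg_apply, Matrix.smul_apply, Matrix.single, Matrix.of_apply,
          smul_eq_mul]
        split_ifs <;> simp_all
    have hsingle : ((fun a => charmatrix (-A) a j) + Pi.single i (C t))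
        = (fun a => charmatrix (-A) a j) + (C t : ℝ[X]) • (Pi.single i 1 : Fin n → ℝ[X]) := by
      funext a; by_cases h : a = i <;> simp [Pi.single_apply, h]
    have hdet : ((-(A + t • Matrix.single i j 1)).charpoly)
        = (-A).charpoly + C t * ((charmatrix (-A)).updateCol j (Pi.single i 1)).det := by
      show (charmatrix _).det = (charmatrix (-A)).det + _
      rw [hmat, hsingle, Matrix.det_updateCol_add, Matrix.det_updateCol_smul,
        Matrix.updateCol_eq_self]
    simp only [sigmaElem, if_pos hkn, hdet, coeff_add, coeff_C_mul]
    rfl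
  have hfun : (fun t : ℝ => sigmaElem n k (A + t • Matrix.single i j 1))
      = fun t : ℝ => sigmaElem n k A + t * D := funext key
  rw [sigmaD, hfun]
  have h : HasDerivAt (fun t : ℝ => sigmaElem n k A + t * D) D 0 := by
    simpa using ((hasDerivAt_id (0:ℝ)).mul_const D).const_add (sigmaElem n k A)
  exact h.deriv

private lemma charmatrix_symm (n : ℕ) (A : Matrix (Fin n) (Fin n) ℝ) (hA : A.IsSymm) :
    (charmatrix (-A))ᵀ = charmatrix (-A) := by
  have hAe : ∀ a b, A b a = A a b := fun a b => by
    conv_rhs => rw [← hA]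
    rfl
  ext a b
  by_cases h : a = b
  · subst h; rfl
  · rw [Matrix.transpose_apply, charmatrix_apply_ne _ _ _ (Ne.symm h),
      charmatrix_apply_ne _ _ _ h, Matrix.neg_apply, Matrix.neg_apply, hAe]

private lemma sigmaGrad_eq_adj (n k : ℕ) (hkn : k ≤ n) (A : Matrix (Fin n) (Fin n) ℝ)
    (hA : A.IsSymm) :
    sigmaGrad n k A =
      Matrix.of fun i j => ((Matrix.adjugate (charmatrix (-A))) i j).coeff (n - k) := by
  ext i j
  rw [sigmaGrad, Matrix.of_apply, sigmaD_eq_det n k hkn, Matrix.of_apply]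
  congr 1
  rw [Matrix.adjugate_apply, ← Matrix.det_transpose ((charmatrix (-A)).updateRow j _),
    ← Matrix.updateCol_transpose, charmatrix_symm n A hA]

private lemma adj_comm (n : ℕ) (A : Matrix (Fin n) (Fin n) ℝ) :
    Matrix.adjugate (charmatrix (-A)) * ((C : ℝ →+* ℝ[X]).mapMatrix A)
      = ((C : ℝ →+* ℝ[X]).mapMatrix A) * Matrix.adjugate (charmatrix (-A)) := by
  set M := charmatrix (-A) with hM
  have h1 : Matrix.adjugate M * M = M * Matrix.adjugate M := by
    rw [Matrix.adjugate_mul, Matrix.mul_adjugate]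
  have h2 : (C : ℝ →+* ℝ[X]).mapMatrix A
      = M - (X : ℝ[X]) • (1 : Matrix (Fin n) (Fin n) ℝ[X]) := by
    ext a b
    by_cases h : a = b
    · subst h
      simp [hM, charmatrix_apply_eq, RingHom.mapMatrix_apply, Matrix.map_apply,
        Matrix.one_apply, sub_sub_cancel_left]
    · simp [hM, charmatrix_apply_ne _ _ _ h, RingHom.mapMatrix_apply, Matrix.map_apply,
        Matrix.one_apply_ne h]
  rw [h2, Matrix.mul_sub, Matrix.sub_mul, h1, Matrix.mul_smul, Matrix.smul_mul, mul_one,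
    one_mul]


/-- for symmetric `A`, `σ_k'(A)` commutes with `A` and `σ_k'(A) * A` is
symmetric; entrywise `∑_i σ_k^{ij}(A) a_{il} = ∑_i σ_k^{il}(A) a_{ij}`. -/
theorem statement5 (n k : ℕ) (hk1 : 1 ≤ k) (hkn : k ≤ n)
    (A : Matrix (Fin n) (Fin n) ℝ) (hA : A.IsSymm) :
    sigmaGrad n k A * A = A * sigmaGrad n k A ∧
    (sigmaGrad n k A * A).IsSymm ∧
    ∀ j l, ∑ i, sigmaD n k A i j * A i l = ∑ i, sigmaD n k A i l * A i j := by
  set M := charmatrix (-A) with hMdef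
  have hG : sigmaGrad n k A =
      Matrix.of fun i j => ((Matrix.adjugate M) i j).coeff (n - k) :=
    sigmaGrad_eq_adj n k hkn A hA
  have hadjsymm : (Matrix.adjugate M)ᵀ = Matrix.adjugate M := by
    rw [Matrix.adjugate_transpose, charmatrix_symm n A hA]
  have hGsymm : (sigmaGrad n k A)ᵀ = sigmaGrad n k A := by
    rw [hG]
    ext i j
    rw [Matrix.transpose_apply, Matrix.of_apply, Matrix.of_apply]
    congr 1
    conv_lhs => rw [← hadjsymm]
    rfl
  have hcomm : sigmaGrad n k A * A = A * sigmaGrad n k A := by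
    ext i l
    have h := congrArg (fun B => Polynomial.coeff (B i l) (n - k)) (adj_comm n A)
    simpa [hG, Matrix.mul_apply, RingHom.mapMatrix_apply, Matrix.map_apply,
      Polynomial.finset_sum_coeff, Polynomial.coeff_mul_C, Polynomial.coeff_C_mul] using h
  have hprodsymm : (sigmaGrad n k A * A).IsSymm := by
    rw [Matrix.IsSymm, Matrix.transpose_mul, hA, hGsymm, hcomm]
  refine ⟨hcomm, hprodsymm, fun j l => ?_⟩
  have e : ∀ j l : Fin n, ∑ i, sigmaD n k A i j * A i l = (sigmaGrad n k A * A) j l := by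
    intro j l
    rw [Matrix.mul_apply]
    refine Finset.sum_congr rfl fun i _ => ?_
    congr 1
    conv_lhs => rw [show (sigmaD n k A i j) = sigmaGrad n k A i j from rfl, ← hGsymm]
    rfl
  rw [e j l, e l j]
  have := congrFun (congrFun hprodsymm l) j
  simpa using this
end

section
/- Let 2 ≤ k ≤ n and let A be a real symmetric n×n matrix with A ∈ Γ_k. If σ_k(A) = C_n^k and σ_{k−1}(A) = C_n^{k−1}, then all eigenvalues of A are equal to 1, i.e. A = I. -/
open Matrix

open Polynomial

namespace S11

lemma esymm_zero' (s : Multiset ℝ) : s.esymm 0 = 1 := by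
  simp [Multiset.esymm]

lemma esymm_one' (s : Multiset ℝ) : s.esymm 1 = s.sum := by
  simp [Multiset.esymm, Multiset.powersetCard_one, Multiset.map_map, Function.comp_def]

lemma esymm_cons (a : ℝ) (s : Multiset ℝ) (j : ℕ) :
    (a ::ₘ s).esymm (j + 1) = s.esymm (j + 1) + a * s.esymm j := by
  simp only [Multiset.esymm, Multiset.powersetCard_cons, Multiset.map_add, Multiset.sum_add,
    Multiset.map_map, Function.comp_def, Multiset.prod_cons]
  rw [Multiset.sum_map_mul_left]

lemma esymm_of_lt {s : Multiset ℝ} {j : ℕ} (h : Multiset.card s < j) : s.esymm j = 0 := by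
  simp [Multiset.esymm, Multiset.powersetCard_eq_empty _ h]

lemma sum_sq_eq (s : Multiset ℝ) :
    (s.map (fun x => x ^ 2)).sum = s.sum ^ 2 - 2 * s.esymm 2 := by
  induction s using Multiset.induction with
  | empty => simp [Multiset.esymm, Multiset.powersetCard_eq_empty _ (show Multiset.card (0 : Multiset ℝ) < 2 by simp)]
  | cons a t ih =>
      rw [Multiset.map_cons, Multiset.sum_cons, Multiset.sum_cons, ih,
        show (2 : ℕ) = 1 + 1 from rfl, esymm_cons, esymm_one']
      ring

lemma two_mul_choose_two (n : ℕ) : 2 * n.choose 2 = n * (n - 1) := by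
  rw [Nat.choose_two_right]
  apply Nat.mul_div_cancel'
  rcases n with _ | m
  · simp
  · simpa [Nat.succ_sub_one, mul_comm] using (Nat.even_mul_succ_self m).two_dvd

lemma base_newton : ∀ (m : ℕ) (s : Multiset ℝ), Multiset.card s = m + 2 →
    2 * ((m : ℝ) + 2) * (s.esymm m * s.esymm (m + 2)) ≤ ((m : ℝ) + 1) * s.esymm (m + 1) ^ 2 := by
  intro m
  induction m with
  | zero =>
      intro s hs
      obtain ⟨x, y, rfl⟩ := Multiset.card_eq_two.mp hs
      have h1 : ({x, y} : Multiset ℝ).esymm 0 = 1 := esymm_zero' _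
      have h2 : ({x, y} : Multiset ℝ).esymm 1 = x + y := by
        rw [esymm_one']; simp
      have h3 : ({x, y} : Multiset ℝ).esymm 2 = x * y := by
        rw [show ({x, y} : Multiset ℝ) = x ::ₘ (y ::ₘ 0) from rfl,
          show (2 : ℕ) = 1 + 1 from rfl, esymm_cons, esymm_cons]
        simp [esymm_of_lt, esymm_one']
        exact esymm_of_lt (by simp)
      rw [h1, h2, h3]
      push_cast
      nlinarith [sq_nonneg (x - y)]
  | succ m ih =>
      intro s hs
      have hx : ∃ x, x ∈ s := Multiset.card_pos_iff_exists_mem.mp (by omega)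
      obtain ⟨x, hxs⟩ := hx
      obtain ⟨t, rfl⟩ := Multiset.exists_cons_of_mem hxs
      have hct : Multiset.card t = m + 2 := by
        have := hs; rw [Multiset.card_cons] at this; omega
      have IH := ih t hct
      set R := t.esymm m with hR
      set Q := t.esymm (m + 1) with hQ
      set P := t.esymm (m + 2) with hP
      have e1 : (x ::ₘ t).esymm (m + 1) = Q + x * R := esymm_cons x t m
      have e2 : (x ::ₘ t).esymm (m + 2) = P + x * Q := esymm_cons x t (m + 1)
      have e3 : (x ::ₘ t).esymm (m + 3) = x * P := by
        rw [show m + 3 = (m + 2) + 1 from rfl, esymm_cons, esymm_of_lt (by omega)]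
        ring
      rw [show ((m : ℕ) + 1 : ℕ) = m + 1 from rfl]
      rw [show (m + 1) + 2 = m + 3 from rfl, show (m + 1) + 1 = m + 2 from rfl, e1, e2, e3]
      have key : ((m : ℝ) + 2) * ((((m : ℝ) + 1) + 1) * (P + x * Q) ^ 2
            - 2 * (((m : ℝ) + 1) + 2) * ((Q + x * R) * (x * P)))
          = ((m + 2) * P - x * Q) ^ 2
            + (m + 3) * x ^ 2 * ((m + 1) * Q ^ 2 - 2 * (m + 2) * (R * P)) := by
        ring
      have h2 : (0 : ℝ) ≤ (m + 1) * Q ^ 2 - 2 * (m + 2) * (R * P) := by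
        nlinarith [IH]
      have h3 : (0 : ℝ) ≤ ((m + 2) * P - x * Q) ^ 2
            + (m + 3) * x ^ 2 * ((m + 1) * Q ^ 2 - 2 * (m + 2) * (R * P)) := by
        have := mul_nonneg (mul_nonneg (by positivity : (0:ℝ) ≤ (m:ℝ) + 3) (sq_nonneg x)) h2
        nlinarith [sq_nonneg ((m + 2) * P - x * Q)]
      have h4 : (0 : ℝ) < (m : ℝ) + 2 := by positivity
      push_cast
      nlinarith [key, h3, h4]

lemma choose_mul (n l : ℕ) (h : l + 1 ≤ n) : n * (n - 1).choose l = (n - l) * n.choose l := by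
  have h1 := Nat.add_one_mul_choose_eq (n - 1) l
  rw [show n - 1 + 1 = n from by omega] at h1
  rw [h1, Nat.choose_succ_right_eq, mul_comm]

lemma newton : ∀ (n : ℕ) (s : Multiset ℝ) (i : ℕ), Multiset.card s = n → i + 2 ≤ n →
    (n.choose (i + 1) : ℝ) ^ 2 * (s.esymm i * s.esymm (i + 2)) ≤
      ((n.choose i : ℝ) * (n.choose (i + 2) : ℝ)) * s.esymm (i + 1) ^ 2 := by
  intro n
  induction n using Nat.strong_induction_on with
  | _ n ih =>
    intro s i hcard hin
    rcases eq_or_lt_of_le hin with heq | hlt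
    · subst heq
      have c1 : (i + 2).choose (i + 1) = i + 2 := by
        rw [show i + 2 = (i + 1) + 1 from rfl, Nat.choose_succ_self_right]
      have c2 : (i + 2).choose (i + 2) = 1 := Nat.choose_self _
      have c0 : 2 * ((i + 2).choose i) = (i + 2) * (i + 1) := by
        have h := Nat.choose_symm (show 2 ≤ i + 2 by omega)
        rw [Nat.add_sub_cancel] at h
        rw [h, two_mul_choose_two]
        congr 1
      have c0R : 2 * (((i + 2).choose i : ℕ) : ℝ) = ((i : ℝ) + 2) * ((i : ℝ) + 1) := by
        exact_mod_cast c0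
      have hb := base_newton i s hcard
      have T := mul_le_mul_of_nonneg_left hb (show (0:ℝ) ≤ (i : ℝ) + 2 by positivity)
      have c0F : 2 * (((i + 2).choose i : ℕ) : ℝ) * s.esymm (i + 1) ^ 2
          = ((i : ℝ) + 2) * ((i : ℝ) + 1) * s.esymm (i + 1) ^ 2 := by rw [c0R]
      rw [c1, c2]
      push_cast
      nlinarith [T, c0F]
    · -- derivative step
      have hn1 : 1 ≤ n := by omega
      set P : Polynomial ℝ := (s.map fun x => Polynomial.X - Polynomial.C x).prod with hPdef
      have hmon : P.Monic :=
        Polynomial.monic_multiset_prod_of_monic _ _ (fun p _ => Polynomial.monic_X_sub_C p)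
      have hdegP : P.natDegree = n := by
        rw [hPdef, Polynomial.natDegree_multiset_prod_of_monic]
        · simp only [Multiset.map_map, Function.comp_def, Polynomial.natDegree_X_sub_C]
          rw [Multiset.map_const', Multiset.sum_replicate, smul_eq_mul, mul_one, hcard]
        · intro f hf
          simp only [Multiset.mem_map] at hf
          obtain ⟨x, _, rfl⟩ := hf
          exact Polynomial.monic_X_sub_C x
      have hrootsP : P.roots = s := Polynomial.roots_multiset_prod_X_sub_C s
      have hQle : (Polynomial.derivative P).natDegree ≤ n - 1 := by
        have h := Polynomial.natDegree_derivative_le P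
        omega
      have hQge : n - 1 ≤ Multiset.card (Polynomial.derivative P).roots := by
        have h := Polynomial.card_roots_le_derivative P
        rw [hrootsP, hcard] at h
        omega
      have hQcard_le := Polynomial.card_roots' (Polynomial.derivative P)
      have hQcard : Multiset.card (Polynomial.derivative P).roots = n - 1 := by omega
      have hQdeg : (Polynomial.derivative P).natDegree = n - 1 := by omega
      have hLC : (Polynomial.derivative P).leadingCoeff = (n : ℝ) := by
        rw [Polynomial.leadingCoeff, hQdeg, Polynomial.coeff_derivative,
          show n - 1 + 1 = n from by omega, ← hdegP, Polynomial.Monic.coeff_natDegree hmon]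
        rw [hdegP]
        push_cast [Nat.cast_sub hn1]
        ring
      have key : ∀ l, l ≤ n - 1 → (n : ℝ) * (Polynomial.derivative P).roots.esymm l
          = ((n : ℝ) - l) * s.esymm l := by
        intro l hl
        have h1 := Polynomial.coeff_eq_esymm_roots_of_card
          (show Multiset.card (Polynomial.derivative P).roots = (Polynomial.derivative P).natDegree
            from by rw [hQcard, hQdeg])
          (show n - 1 - l ≤ (Polynomial.derivative P).natDegree from by omega)
        rw [hQdeg, show n - 1 - (n - 1 - l) = l from by omega, hLC] at h1
        have h2 : (Polynomial.derivative P).coeff (n - 1 - l) = P.coeff (n - l) * ((n : ℝ) - l) := by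
          rw [Polynomial.coeff_derivative, show n - 1 - l + 1 = n - l from by omega]
          congr 1
          push_cast [Nat.cast_sub (show l ≤ n - 1 by omega), Nat.cast_sub hn1]
          ring
        have h3 : P.coeff (n - l) = (-1 : ℝ) ^ l * s.esymm l := by
          have h := Multiset.prod_X_sub_C_coeff s
            (show n - l ≤ Multiset.card s from by rw [hcard]; omega)
          rw [hcard, show n - (n - l) = l from by omega] at h
          exact h
        rw [h2, h3] at h1
        have hpow : ((-1 : ℝ) ^ l) ≠ 0 := pow_ne_zero _ (by norm_num)
        have h4 : (-1 : ℝ) ^ l * ((n : ℝ) * (Polynomial.derivative P).roots.esymm l)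
            = (-1 : ℝ) ^ l * (((n : ℝ) - l) * s.esymm l) := by linear_combination (-1 : ℝ) * h1
        exact mul_left_cancel₀ hpow h4
      set s' := (Polynomial.derivative P).roots with hs'
      have IH := ih (n - 1) (by omega) s' i hQcard (by omega)
      have hn0 : (0 : ℝ) < (n : ℝ) := by
        have : 0 < n := by omega
        exact_mod_cast this
      have hne : (n : ℝ) ≠ 0 := ne_of_gt hn0
      have hiR : ((i : ℝ)) + 2 < (n : ℝ) := by exact_mod_cast hlt
      have hu : (0:ℝ) < (n:ℝ) - (i:ℝ) := by linarith
      have hv : (0:ℝ) < (n:ℝ) - ((i:ℝ)+1) := by linarith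
      have hw : (0:ℝ) < (n:ℝ) - ((i:ℝ)+2) := by linarith
      have E0 : s'.esymm i = (((n:ℝ) - (i:ℝ)) * s.esymm i) / (n:ℝ) := by
        have h := key i (by omega)
        field_simp
        linarith
      have E1 : s'.esymm (i+1) = (((n:ℝ) - ((i:ℝ)+1)) * s.esymm (i+1)) / (n:ℝ) := by
        have h := key (i+1) (by omega)
        push_cast at h
        field_simp
        linarith
      have E2 : s'.esymm (i+2) = (((n:ℝ) - ((i:ℝ)+2)) * s.esymm (i+2)) / (n:ℝ) := by
        have h := key (i+2) (by omega)
        push_cast at h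
        field_simp
        linarith
      have hC : ∀ l : ℕ, l + 1 ≤ n → (((n-1).choose l : ℕ) : ℝ)
          = (((n:ℝ) - (l:ℝ)) * (n.choose l : ℝ)) / (n:ℝ) := by
        intro l hl
        have h := choose_mul n l hl
        have h' : (n:ℝ) * (((n-1).choose l : ℕ) : ℝ)
            = ((n - l : ℕ) : ℝ) * ((n.choose l : ℕ) : ℝ) := by exact_mod_cast h
        have hc : ((n - l : ℕ) : ℝ) = (n:ℝ) - (l:ℝ) := by
          push_cast [Nat.cast_sub (by omega : l ≤ n)]
          ring
        rw [hc] at h'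
        field_simp
        linarith
      have C0 := hC i (by omega)
      have C1 := hC (i+1) (by omega)
      have C2 := hC (i+2) (by omega)
      push_cast at C1 C2
      rw [E0, E1, E2, C0, C1, C2] at IH
      have H := mul_le_mul_of_nonneg_left IH (show (0:ℝ) ≤ (n:ℝ)^4 by positivity)
      have hK : (0:ℝ) < ((n:ℝ) - ((i:ℝ)+1))^2 * (((n:ℝ) - (i:ℝ)) * ((n:ℝ) - ((i:ℝ)+2))) :=
        mul_pos (pow_pos hv 2) (mul_pos hu hw)
      refine le_of_mul_le_mul_left ?_ hK
      calc ((n:ℝ) - ((i:ℝ)+1))^2 * (((n:ℝ) - (i:ℝ)) * ((n:ℝ) - ((i:ℝ)+2))) *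
            ((n.choose (i + 1) : ℝ) ^ 2 * (s.esymm i * s.esymm (i + 2)))
          = (n:ℝ)^4 * (((((n:ℝ) - ((i:ℝ)+1)) * ((n.choose (i+1) : ℕ) : ℝ)) / (n:ℝ))^2 *
              ((((n:ℝ) - (i:ℝ)) * s.esymm i) / (n:ℝ) *
                ((((n:ℝ) - ((i:ℝ)+2)) * s.esymm (i+2)) / (n:ℝ)))) := by
            field_simp
        _ ≤ (n:ℝ)^4 * ((((n:ℝ) - (i:ℝ)) * ((n.choose i : ℕ) : ℝ)) / (n:ℝ) *
              ((((n:ℝ) - ((i:ℝ)+2)) * ((n.choose (i+2) : ℕ) : ℝ)) / (n:ℝ)) *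
              ((((n:ℝ) - ((i:ℝ)+1)) * s.esymm (i+1)) / (n:ℝ))^2) := H
        _ = ((n:ℝ) - ((i:ℝ)+1))^2 * (((n:ℝ) - (i:ℝ)) * ((n:ℝ) - ((i:ℝ)+2))) *
              (((n.choose i : ℝ) * (n.choose (i+2) : ℝ)) * s.esymm (i+1)^2) := by
            field_simp

lemma mono_window (f : ℕ → ℝ) (a b : ℕ) (h : ∀ j, a ≤ j → j + 1 ≤ b → f j ≤ f (j + 1)) :
    ∀ j, a ≤ j → j ≤ b → f j ≤ f b := by
  have aux : ∀ d j, a ≤ j → j + d ≤ b → f j ≤ f (j + d) := by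
    intro d
    induction d with
    | zero => intro j _ _; simp
    | succ d ihd =>
        intro j hj hb
        calc f j ≤ f (j + 1) := h j hj (by omega)
          _ ≤ f (j + 1 + d) := ihd (j + 1) (by omega) (by omega)
          _ = f (j + (d + 1)) := by rw [show j + 1 + d = j + (d + 1) from by omega]
  intro j hj hjb
  have hh := aux (b - j) j hj (by omega)
  rwa [show j + (b - j) = b from by omega] at hh

lemma charpoly_conj {n : ℕ} (U B V : Matrix (Fin n) (Fin n) ℝ) (h1 : U * V = 1) :
    (U * B * V).charpoly = B.charpoly := by
  have hUV : U.map Polynomial.C * V.map Polynomial.C = 1 := by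
    rw [← Matrix.map_mul, h1, Matrix.map_one _ Polynomial.C_0 Polynomial.C_1]
  have hcm : (U * B * V).charmatrix = U.map Polynomial.C * B.charmatrix * V.map Polynomial.C := by
    unfold Matrix.charmatrix
    simp only [RingHom.mapMatrix_apply]
    rw [mul_sub, sub_mul]
    congr 1
    · have hcomm := (Matrix.scalar_commute (Polynomial.X : Polynomial ℝ)
        (fun r => Commute.all _ r) (U.map Polynomial.C)).symm
      symm
      calc U.map Polynomial.C * Matrix.scalar (Fin n) (Polynomial.X : Polynomial ℝ)
            * V.map Polynomial.C
          = Matrix.scalar (Fin n) (Polynomial.X : Polynomial ℝ) *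
              (U.map Polynomial.C * V.map Polynomial.C) := by rw [hcomm]; rw [mul_assoc]
        _ = Matrix.scalar (Fin n) (Polynomial.X : Polynomial ℝ) := by rw [hUV, mul_one]
    · rw [Matrix.map_mul, Matrix.map_mul]
  rw [Matrix.charpoly, Matrix.charpoly, hcm, Matrix.det_mul, Matrix.det_mul]
  have hdet : (U.map Polynomial.C).det * (V.map Polynomial.C).det = 1 := by
    rw [← Matrix.det_mul, hUV, Matrix.det_one]
  calc (U.map Polynomial.C).det * B.charmatrix.det * (V.map Polynomial.C).det
      = B.charmatrix.det * ((U.map Polynomial.C).det * (V.map Polynomial.C).det) := by ring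
    _ = B.charmatrix.det := by rw [hdet, mul_one]

lemma spectral_decomp {n : ℕ} (A : Matrix (Fin n) (Fin n) ℝ) (hH : A.IsHermitian) :
    ∃ V : Matrix (Fin n) (Fin n) ℝ, V * star V = 1 ∧ star V * V = 1 ∧
      A = V * Matrix.diagonal hH.eigenvalues * star V := by
  refine ⟨(hH.eigenvectorUnitary : Matrix (Fin n) (Fin n) ℝ), ?_, ?_, ?_⟩
  · exact Matrix.mem_unitaryGroup_iff.mp hH.eigenvectorUnitary.2
  · exact Matrix.mem_unitaryGroup_iff'.mp hH.eigenvectorUnitary.2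
  · have h := hH.spectral_theorem
    rwa [RCLike.ofReal_real_eq_id, Function.id_comp] at h

lemma sigma_eq_esymm {n : ℕ} (A : Matrix (Fin n) (Fin n) ℝ) (hH : A.IsHermitian)
    (j : ℕ) (hj : j ≤ n) :
    sigmaElem n j A = (Multiset.map hH.eigenvalues Finset.univ.val).esymm j := by
  obtain ⟨V, hVsV, hsVV, hA'⟩ := spectral_decomp A hH
  have hd : Matrix.diagonal (fun i => - hH.eigenvalues i) = - Matrix.diagonal hH.eigenvalues := by
    ext i j
    by_cases h : i = j <;> simp [Matrix.diagonal_apply, h]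
  have hnegA : -A = V * Matrix.diagonal (fun i => - hH.eigenvalues i) * star V := by
    calc -A = -(V * Matrix.diagonal hH.eigenvalues * star V) := by rw [← hA']
      _ = V * (-(Matrix.diagonal hH.eigenvalues)) * star V := by
          rw [mul_neg, neg_mul]
      _ = V * Matrix.diagonal (fun i => - hH.eigenvalues i) * star V := by rw [hd]
  have hdiag : (Matrix.diagonal (fun i => - hH.eigenvalues i)).charpoly
      = ∏ i : Fin n, (Polynomial.X + Polynomial.C (hH.eigenvalues i)) := by
    rw [Matrix.charpoly_of_upperTriangular _ (Matrix.blockTriangular_diagonal _)]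
    refine Finset.prod_congr rfl fun i _ => ?_
    rw [Matrix.diagonal_apply_eq, map_neg, sub_neg_eq_add]
  have hcardu : Multiset.card (Finset.univ.val : Multiset (Fin n)) = n := by
    simpa using Finset.card_univ (α := Fin n)
  have hcoeff := Multiset.prod_X_add_C_coeff' (Finset.univ.val : Multiset (Fin n))
    hH.eigenvalues (show n - j ≤ Multiset.card (Finset.univ.val : Multiset (Fin n)) from by
      rw [hcardu]; omega)
  rw [hcardu, show n - (n - j) = j from by omega] at hcoeff
  rw [sigmaElem, if_pos hj, hnegA, charpoly_conj _ _ _ hVsV, hdiag]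
  rw [show (∏ i : Fin n, (Polynomial.X + Polynomial.C (hH.eigenvalues i)))
      = ((Finset.univ.val : Multiset (Fin n)).map
          (fun i => Polynomial.X + Polynomial.C (hH.eigenvalues i))).prod from rfl]
  exact hcoeff

end S11

/-- equality case of the MacLaurin inequalities: if `A ∈ Γ_k`,
`σ_k(A) = C_n^k` and `σ_{k-1}(A) = C_n^{k-1}`, then `A = I`. -/
theorem statement11 (n k : ℕ) (hk2 : 2 ≤ k) (hkn : k ≤ n)
    (A : Matrix (Fin n) (Fin n) ℝ) (hA : A ∈ GammaCone n k)
    (hk : sigmaElem n k A = (n.choose k : ℝ))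
    (hk1 : sigmaElem n (k - 1) A = (n.choose (k - 1) : ℝ)) :
    A = (1 : Matrix (Fin n) (Fin n) ℝ) := by
  obtain ⟨hsymm, hpos⟩ := hA
  have n2 : 2 ≤ n := le_trans hk2 hkn
  have hH : A.IsHermitian := by
    rw [Matrix.IsHermitian, Matrix.conjTranspose_eq_transpose_of_trivial]
    exact hsymm
  set ev := hH.eigenvalues with hev
  set m : Multiset ℝ := Multiset.map ev Finset.univ.val with hm
  have hmcard : Multiset.card m = n := by simp [hm]
  have hsig : ∀ j, j ≤ n → sigmaElem n j A = m.esymm j :=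
    fun j hj => S11.sigma_eq_esymm A hH j hj
  set p : ℕ → ℝ := fun j => m.esymm j / (n.choose j : ℝ) with hp
  have hchoosepos : ∀ j, j ≤ n → (0:ℝ) < (n.choose j : ℝ) := by
    intro j hj
    exact_mod_cast Nat.choose_pos hj
  have hppos : ∀ j, 1 ≤ j → j ≤ k → 0 < p j := by
    intro j h1 h2
    have h := hpos j h1 h2
    rw [hsig j (le_trans h2 hkn)] at h
    exact div_pos h (hchoosepos j (le_trans h2 hkn))
  have hp0 : p 0 = 1 := by
    simp [hp, S11.esymm_zero']
  have hpk : p k = 1 := by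
    rw [hsig k hkn] at hk
    rw [hp]
    simp only
    rw [hk, div_self (ne_of_gt (hchoosepos k hkn))]
  have hpk1 : p (k - 1) = 1 := by
    rw [hsig (k-1) (by omega)] at hk1
    rw [hp]
    simp only
    rw [hk1, div_self (ne_of_gt (hchoosepos (k-1) (by omega)))]
  have hnewton : ∀ i, i + 2 ≤ k → p i * p (i + 2) ≤ p (i + 1) ^ 2 := by
    intro i hik
    have hN := S11.newton n m i hmcard (le_trans hik hkn)
    have c0 := hchoosepos i (by omega)
    have c1 := hchoosepos (i+1) (by omega)
    have c2 := hchoosepos (i+2) (by omega)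
    rw [hp]
    simp only
    rw [div_mul_div_comm, div_pow, div_le_div_iff₀ (by positivity) (by positivity)]
    nlinarith [hN]
  set r : ℕ → ℝ := fun j => p (j - 1) / p j with hr
  have hrk : r k = 1 := by
    rw [hr]
    simp only
    rw [hpk1, hpk, div_one]
  have hrmono : ∀ j, 1 ≤ j → j + 1 ≤ k → r j ≤ r (j + 1) := by
    intro j h1 h2
    obtain ⟨i, rfl⟩ : ∃ i, j = i + 1 := ⟨j - 1, by omega⟩
    have hstep := hnewton i (by omega)
    rw [hr]
    simp only [Nat.add_sub_cancel]
    rw [div_le_div_iff₀ (hppos (i+1) (by omega) (by omega)) (hppos (i+2) (by omega) (by omega))]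
    nlinarith [hstep]
  have hrle1 : ∀ j, 1 ≤ j → j ≤ k → r j ≤ 1 := by
    intro j h1 h2
    have h := S11.mono_window r 1 k hrmono j h1 h2
    rwa [hrk] at h
  have hpmono : ∀ j, 1 ≤ j → j ≤ k → p (j - 1) ≤ p j := by
    intro j h1 h2
    have h := hrle1 j h1 h2
    rw [hr] at h
    simp only at h
    exact (div_le_one (hppos j h1 h2)).mp h
  have hpstep : ∀ j, 1 ≤ j → j + 1 ≤ k → p j ≤ p (j + 1) := by
    intro j h1 h2
    have h := hpmono (j+1) (by omega) (by omega)
    rwa [Nat.add_sub_cancel] at h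
  have hp1 : p 1 = 1 := by
    have hup : p 1 ≤ 1 := by
      have h := S11.mono_window p 1 k hpstep 1 le_rfl (by omega)
      rwa [hpk] at h
    have hlow : 1 ≤ p 1 := by
      have h := hpmono 1 le_rfl (by omega)
      rw [show (1:ℕ) - 1 = 0 from rfl, hp0] at h
      exact h
    linarith
  have hp2 : p 2 = 1 := by
    have hup : p 2 ≤ 1 := by
      have h := S11.mono_window p 1 k hpstep 2 (by omega) (by omega)
      rwa [hpk] at h
    have hlow : 1 ≤ p 2 := by
      have h := hpmono 2 (by omega) (by omega)
      rw [show (2:ℕ) - 1 = 1 from rfl, hp1] at h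
      exact h
    linarith
  have he1 : m.esymm 1 = (n : ℝ) := by
    have h : m.esymm 1 / ((n.choose 1 : ℕ) : ℝ) = 1 := hp1
    rw [Nat.choose_one_right] at h
    have hn0 : ((n:ℕ):ℝ) ≠ 0 := by
      have hn : (0:ℝ) < (n:ℝ) := by exact_mod_cast (show 0 < n by omega)
      exact ne_of_gt hn
    field_simp at h
    exact h
  have he2 : m.esymm 2 = ((n.choose 2 : ℕ) : ℝ) := by
    have h : m.esymm 2 / ((n.choose 2 : ℕ) : ℝ) = 1 := hp2
    have h2 := hchoosepos 2 (by omega)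
    field_simp at h
    exact h
  have hsum : m.sum = (n : ℝ) := by rw [← S11.esymm_one']; exact he1
  have hsumsq : (m.map (fun x => x ^ 2)).sum = (n : ℝ) := by
    rw [S11.sum_sq_eq, hsum, he2]
    have h2c : 2 * ((n.choose 2 : ℕ) : ℝ) = (n : ℝ) * ((n : ℝ) - 1) := by
      have h := S11.two_mul_choose_two n
      have h' : ((2 * n.choose 2 : ℕ) : ℝ) = ((n * (n-1) : ℕ) : ℝ) := by exact_mod_cast h
      push_cast [Nat.cast_sub (show 1 ≤ n by omega)] at h'
      linarith
    linear_combination - h2c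
  have e1A : sigmaElem n 1 A = (n : ℝ) := by rw [hsig 1 (by omega)]; exact he1
  have htr : A.trace = (n : ℝ) := by
    have : Nonempty (Fin n) := ⟨⟨0, by omega⟩⟩
    have h := Matrix.trace_eq_neg_charpoly_coeff (-A)
    rw [Matrix.trace_neg] at h
    have hc : Fintype.card (Fin n) - 1 = n - 1 := by simp
    rw [hc] at h
    have hs : sigmaElem n 1 A = ((-A).charpoly).coeff (n - 1) := by
      rw [sigmaElem, if_pos (by omega : 1 ≤ n)]
    rw [← hs, e1A] at h
    linarith
  obtain ⟨V, hVsV, hsVV, hA'⟩ := S11.spectral_decomp A hH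
  have hAA : A * A = V * (Matrix.diagonal ev * Matrix.diagonal ev) * star V := by
    rw [hA']
    have hmid : star V * (V * (Matrix.diagonal ev * star V))
        = Matrix.diagonal ev * star V := by
      rw [← Matrix.mul_assoc (star V) V _, hsVV, Matrix.one_mul]
    simp only [Matrix.mul_assoc]
    rw [hmid]
  have hms : (m.map fun x => x ^ 2).sum = ∑ i, ev i * ev i := by
    rw [hm, Multiset.map_map, Finset.sum_eq_multiset_sum]
    congr 1
    apply Multiset.map_congr rfl
    intro x _
    simp [Function.comp, pow_two]
  have htr2 : (A * A).trace = (n : ℝ) := by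
    rw [hAA, Matrix.trace_mul_cycle, hsVV, Matrix.one_mul, Matrix.diagonal_mul_diagonal,
      Matrix.trace_diagonal]
    rw [← hms]
    exact hsumsq
  have htrB : ((A - 1) * (A - 1)).trace = 0 := by
    have hexp : (A - 1) * (A - 1) = A * A - A - A + 1 := by noncomm_ring
    rw [hexp, Matrix.trace_add, Matrix.trace_sub, Matrix.trace_sub, Matrix.trace_one, htr, htr2]
    simp [Fintype.card_fin]
  have hBsymm : ∀ i j, (A - 1) j i = (A - 1) i j := by
    intro i j
    have hsym := congrFun (congrFun hsymm i) j
    rw [Matrix.transpose_apply] at hsym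
    simp only [Matrix.sub_apply, hsym, Matrix.one_apply]
    by_cases h : i = j <;> simp [h, eq_comm]
  have h0 : ((A - 1) * (A - 1)).trace = ∑ i, ∑ j, (A - 1) i j ^ 2 := by
    rw [Matrix.trace]
    refine Finset.sum_congr rfl fun i _ => ?_
    rw [Matrix.diag_apply, Matrix.mul_apply]
    refine Finset.sum_congr rfl fun j _ => ?_
    rw [hBsymm i j, pow_two]
  have hBsum : ∑ i, ∑ j, (A - 1) i j ^ 2 = 0 := by rw [← h0, htrB]
  have hentry : ∀ i j, (A - 1) i j = 0 := by
    intro i j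
    have hnn : ∀ i ∈ Finset.univ, (0:ℝ) ≤ ∑ j : Fin n, (A - 1) i j ^ 2 :=
      fun i _ => Finset.sum_nonneg fun j _ => sq_nonneg _
    have h1 := (Finset.sum_eq_zero_iff_of_nonneg hnn).mp hBsum i (Finset.mem_univ i)
    have h2 := (Finset.sum_eq_zero_iff_of_nonneg
      (fun j _ => sq_nonneg ((A - 1) i j))).mp h1 j (Finset.mem_univ j)
    exact pow_eq_zero_iff (two_ne_zero) |>.mp h2
  ext i j
  have h := hentry i j
  rw [Matrix.sub_apply] at h
  linarith [h]
end

section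
/- Let n ≥ 2 and 1 ≤ k ≤ n. Let d₁,…,d_{n−1} be positive real numbers, let t ∈ ℝ, and let A be the n×n diagonal matrix diag(d₁,…,d_{n−1}, t). If σ_k(A) > 0, then σ_j(A) > 0 for every 1 ≤ j ≤ k; in particular A ∈ Γ_k. -/
open Matrix

set_option linter.unusedSectionVars false
set_option linter.unusedVariables false

section AuxEsum
open Polynomial Finset

variable {ι : Type*} [DecidableEq ι] (f : ι → ℝ)

noncomputable def esum (s : Finset ι) (j : ℕ) : ℝ :=
  ∑ t ∈ s.powersetCard j, ∏ i ∈ t, f i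

lemma esum_zero (s : Finset ι) : esum f s 0 = 1 := by
  simp [esum]

lemma esum_of_lt {s : Finset ι} {j : ℕ} (h : s.card < j) : esum f s j = 0 := by
  rw [esum, Finset.powersetCard_eq_empty.2 h, Finset.sum_empty]

lemma esum_insert {a : ι} {s : Finset ι} (h : a ∉ s) (j : ℕ) :
    esum f (insert a s) (j + 1) = esum f s (j + 1) + f a * esum f s j := by
  have hdis : Disjoint (s.powersetCard (j + 1)) ((s.powersetCard j).image (insert a)) := by
    rw [Finset.disjoint_left]
    intro t ht ht'
    obtain ⟨u, hu, rfl⟩ := Finset.mem_image.mp ht'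
    exact h ((Finset.mem_powersetCard.mp ht).1 (Finset.mem_insert_self a u))
  rw [esum, Finset.powersetCard_succ_insert h, Finset.sum_union hdis]
  congr 1
  rw [Finset.sum_image, esum, Finset.mul_sum]
  · apply Finset.sum_congr rfl
    intro t ht
    exact Finset.prod_insert fun hat => h ((Finset.mem_powersetCard.mp ht).1 hat)
  · intro t ht u hu he
    have hat : a ∉ t := fun hat => h ((Finset.mem_powersetCard.mp ht).1 hat)
    have hau : a ∉ u := fun hau => h ((Finset.mem_powersetCard.mp hu).1 hau)
    rw [← Finset.erase_insert hat, ← Finset.erase_insert hau, he]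

lemma esum_nonneg {s : Finset ι} (hf : ∀ i ∈ s, 0 ≤ f i) (j : ℕ) : 0 ≤ esum f s j :=
  Finset.sum_nonneg fun t ht =>
    Finset.prod_nonneg fun i hi => hf i ((Finset.mem_powersetCard.mp ht).1 hi)

lemma esum_pos {s : Finset ι} (hf : ∀ i ∈ s, 0 < f i) {j : ℕ} (hj : j ≤ s.card) :
    0 < esum f s j :=
  Finset.sum_pos
    (fun t ht => Finset.prod_pos fun i hi => hf i ((Finset.mem_powersetCard.mp ht).1 hi))
    (Finset.powersetCard_nonempty.2 hj)

lemma esum_lc (s : Finset ι) (hf : ∀ i ∈ s, 0 < f i) :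
    ∀ j : ℕ, esum f s j * esum f s (j + 2) ≤ esum f s (j + 1) * esum f s (j + 1) := by
  induction s using Finset.induction_on with
  | empty =>
    intro j
    rw [esum_of_lt f (show (∅ : Finset ι).card < j + 2 by simp)]
    simpa using mul_self_nonneg (esum f (∅ : Finset ι) (j + 1))
  | @insert a s ha ih =>
    have hfs : ∀ i ∈ s, 0 < f i := fun i hi => hf i (Finset.mem_insert_of_mem hi)
    have ihs := ih hfs
    have hc : 0 < f a := hf a (Finset.mem_insert_self a s)
    have hnn : ∀ m, 0 ≤ esum f s m := esum_nonneg f fun i hi => (hfs i hi).le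
    intro j
    match j with
    | 0 =>
      rw [esum_zero, esum_insert f ha, esum_insert f ha, esum_zero]
      simp only [show (0:ℕ)+1 = 1 by omega, show (1:ℕ)+1 = 2 by omega]
      nlinarith [ihs 0, esum_zero f s, hnn 1, hnn 2, hc.le]
    | j + 1 =>
      rw [esum_insert f ha, esum_insert f ha, esum_insert f ha]
      simp only [show j+1+1 = j+2 by omega, show j+2+1 = j+3 by omega]
      have cross : esum f s j * esum f s (j + 3) ≤ esum f s (j + 1) * esum f s (j + 2) := by
        rcases eq_or_lt_of_le (hnn (j + 2)) with h2 | h2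
        · have hlt : s.card < j + 2 := by
            by_contra hle
            exact absurd h2.symm (ne_of_gt (esum_pos f hfs (by omega)))
          rw [esum_of_lt f (show s.card < j + 3 by omega)]
          rw [mul_zero]
          exact mul_nonneg (hnn (j + 1)) (hnn (j + 2))
        · have hle : j + 2 ≤ s.card := by
            by_contra hlt
            rw [esum_of_lt f (by omega)] at h2
            exact lt_irrefl _ h2
          have h1 : 0 < esum f s (j + 1) := esum_pos f hfs (by omega)
          have key := mul_le_mul (ihs j) (ihs (j + 1)) (mul_nonneg (hnn (j + 1)) (hnn (j + 3)))
            (mul_nonneg (hnn (j + 1)) (hnn (j + 1)))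
          nlinarith [key, mul_pos h1 h2, hnn j, hnn (j + 3)]
      nlinarith [mul_le_mul_of_nonneg_left (ihs j) (mul_nonneg hc.le hc.le),
        mul_le_mul_of_nonneg_left cross hc.le, ihs (j + 1)]

lemma esum_ratio (s : Finset ι) (hf : ∀ i ∈ s, 0 < f i) (a : ℕ) :
    ∀ b : ℕ, a ≤ b → b + 1 ≤ s.card →
      esum f s a * esum f s (b + 1) ≤ esum f s (a + 1) * esum f s b := by
  intro b hab
  induction b, hab using Nat.le_induction with
  | base => intro _; exact le_of_eq (mul_comm _ _)
  | succ b hab ih =>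
    intro hb2
    have hb1 : b + 1 ≤ s.card := by omega
    have ihb := ih hb1
    have lc := esum_lc f s hf b
    have hpb : 0 < esum f s b := esum_pos f hf (by omega)
    have hpb1 : 0 < esum f s (b + 1) := esum_pos f hf (by omega)
    have hnn : ∀ m, 0 ≤ esum f s m := esum_nonneg f fun i hi => (hf i hi).le
    have key := mul_le_mul ihb lc (mul_nonneg (hnn b) (hnn (b + 2)))
      (mul_nonneg (hnn (a + 1)) (hnn b))
    nlinarith [key, mul_pos hpb hpb1, hnn a, hnn (b + 2)]

lemma charpoly_neg_diagonal (n : ℕ) (d : Fin n → ℝ) :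
    (-(Matrix.diagonal d)).charpoly = ∏ i, (Polynomial.X + Polynomial.C (d i)) := by
  rw [Matrix.diagonal_neg]
  have h2 : Matrix.charmatrix (Matrix.diagonal fun i => -d i)
      = Matrix.diagonal (fun i => (Polynomial.X : ℝ[X]) + Polynomial.C (d i)) := by
    ext i j
    by_cases hij : i = j
    · subst hij
      rw [Matrix.charmatrix_apply_eq, Matrix.diagonal_apply_eq, Matrix.diagonal_apply_eq,
        map_neg, sub_neg_eq_add]
    · rw [Matrix.charmatrix_apply_ne _ _ _ hij, Matrix.diagonal_apply_ne _ hij,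
        Matrix.diagonal_apply_ne _ hij, map_zero, neg_zero]
  rw [Matrix.charpoly, h2, Matrix.det_diagonal]

lemma sigma_diag (n : ℕ) (d : Fin n → ℝ) (l : Fin n) {j : ℕ} (hj1 : 1 ≤ j) (hjn : j ≤ n) :
    sigmaElem n j (Matrix.diagonal d)
      = esum d (Finset.univ.erase l) j + d l * esum d (Finset.univ.erase l) (j - 1) := by
  have hcard : (Finset.univ.erase l).card = n - 1 := by
    rw [Finset.card_erase_of_mem (Finset.mem_univ l), Finset.card_univ, Fintype.card_fin]
  rw [sigmaElem, if_pos hjn, charpoly_neg_diagonal,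
    ← Finset.mul_prod_erase _ _ (Finset.mem_univ l), add_mul, Polynomial.coeff_add,
    Polynomial.coeff_C_mul]
  rcases eq_or_lt_of_le hjn with rfl | hjlt
  · rw [Nat.sub_self, Polynomial.coeff_X_mul_zero,
      Finset.prod_X_add_C_coeff _ _ (Nat.zero_le _), hcard, Nat.sub_zero,
      esum_of_lt d (by omega), ← esum]
  · have h1 : (1:ℕ) ≤ n - j := by omega
    obtain ⟨m, hm⟩ : ∃ m, n - j = m + 1 := ⟨n - j - 1, by omega⟩
    rw [hm, Polynomial.coeff_X_mul,
      Finset.prod_X_add_C_coeff _ _ (show m ≤ (Finset.univ.erase l).card by omega),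
      Finset.prod_X_add_C_coeff _ _ (show m + 1 ≤ (Finset.univ.erase l).card by omega),
      hcard, ← esum, ← esum]
    have e1 : n - 1 - m = j := by omega
    have e2 : n - 1 - (m + 1) = j - 1 := by omega
    rw [e1, e2]


end AuxEsum

/-- if `A = diag(d₁,…,d_{n-1}, t)` with `d_i > 0` and `σ_k(A) > 0`,
then `σ_j(A) > 0` for all `1 ≤ j ≤ k`, i.e. `A ∈ Γ_k`. -/
theorem statement12 (n k : ℕ) (hn : 2 ≤ n) (hk1 : 1 ≤ k) (hkn : k ≤ n)
    (d : Fin n → ℝ) (hd : ∀ i : Fin n, (i : ℕ) < n - 1 → 0 < d i)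
    (hk : 0 < sigmaElem n k (Matrix.diagonal d)) :
    (∀ j, 1 ≤ j → j ≤ k → 0 < sigmaElem n j (Matrix.diagonal d)) ∧
      Matrix.diagonal d ∈ GammaCone n k := by
  classical
  have hmain : ∀ j, 1 ≤ j → j ≤ k → 0 < sigmaElem n j (Matrix.diagonal d) := by
    set l : Fin n := ⟨n - 1, by omega⟩ with hl
    set s : Finset (Fin n) := Finset.univ.erase l with hs
    have hcard : s.card = n - 1 := by
      rw [hs, Finset.card_erase_of_mem (Finset.mem_univ l), Finset.card_univ, Fintype.card_fin]
    have hpos : ∀ i ∈ s, 0 < d i := by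
      intro i hi
      apply hd
      have h1 : i ≠ l := Finset.ne_of_mem_erase hi
      have h2 : (i : ℕ) ≠ n - 1 := fun h => h1 (Fin.ext (by rw [h, hl]))
      have := i.isLt
      omega
    have hnn : ∀ m, 0 ≤ esum d s m := esum_nonneg d fun i hi => (hpos i hi).le
    rw [sigma_diag n d l hk1 hkn] at hk
    intro j hj1 hjk
    rw [sigma_diag n d l hj1 (hjk.trans hkn)]
    obtain ⟨j', rfl⟩ : ∃ j', j = j' + 1 := ⟨j - 1, by omega⟩
    obtain ⟨k', rfl⟩ : ∃ k', k = k' + 1 := ⟨k - 1, by omega⟩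
    simp only [Nat.add_sub_cancel] at hk ⊢
    have hEj' : 0 < esum d s j' := esum_pos d hpos (by omega)
    rcases eq_or_lt_of_le hkn with hkeq | hklt
    · have hEn : esum d s (k' + 1) = 0 := esum_of_lt d (by omega)
      rw [hEn] at hk
      have hEk' : 0 < esum d s k' := esum_pos d hpos (by omega)
      have ht : 0 < d l := by nlinarith [hk, hEk']
      have := mul_pos ht hEj'
      linarith [hnn (j' + 1)]
    · have hr := esum_ratio d s hpos j' k' (by omega) (by omega)
      have hEk' : 0 < esum d s k' := esum_pos d hpos (by omega)
      nlinarith [hr, hk, hEj', hEk']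
  exact ⟨hmain, Matrix.isSymm_diagonal d, hmain⟩
end
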